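/- arXiv:1308.3180 — 5 statements merged into one kernel-verified Lean document; each statement's English description precedes it below -/
import Mathlib

section
/- Let e ≥ 5. If nonnegative integers h, m_1, …, m_e satisfy (e−1)·2^e + 2 = 2^{e+1}·h + ∑_{i=1}^e (2^e − 2^{e−i})·m_i, then m_e is even and m_e < 4; that is, m_e ∈ {0, 2}. -/
/-- binary digit sum -/
def s2 : ℕ → ℕ
  | 0 => 0
  | n+1 => (n+1) % 2 + s2 ((n+1)/2)
decreasing_by exact Nat.div_lt_self (Nat.succ_pos n) one_lt_two

lemma s2_zero : s2 0 = 0 := by rw [s2]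

lemma s2_eq (n : ℕ) (h : n ≠ 0) : s2 n = n % 2 + s2 (n/2) := by
  obtain ⟨k, rfl⟩ := Nat.exists_eq_succ_of_ne_zero h
  rw [s2]

lemma s2_two_mul (n : ℕ) : s2 (2*n) = s2 n := by
  rcases Nat.eq_zero_or_pos n with rfl | hn
  · rfl
  · have h1 : (2*n) % 2 = 0 := by omega
    have h2 : (2*n) / 2 = n := by omega
    rw [s2_eq (2*n) (by omega), h1, h2]
    omega

lemma s2_two_mul_add_one (n : ℕ) : s2 (2*n+1) = s2 n + 1 := by
  have h1 : (2*n+1) % 2 = 1 := by omega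
  have h2 : (2*n+1) / 2 = n := by omega
  rw [s2_eq (2*n+1) (by omega), h1, h2]
  omega

lemma s2_one : s2 1 = 1 := by
  rw [s2_eq 1 (by omega)]
  norm_num [s2_zero]

lemma s2_of_even (v : ℕ) (hp : v % 2 = 0) : s2 v = s2 (v/2) := by
  have hv : v = 2*(v/2) := by omega
  exact (congrArg s2 hv).trans (s2_two_mul _)

lemma s2_of_odd (v : ℕ) (hp : v % 2 = 1) : s2 v = s2 (v/2) + 1 := by
  have hv : v = 2*(v/2) + 1 := by omega
  exact (congrArg s2 hv).trans (s2_two_mul_add_one _)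

lemma s2_pow_mul_add (a : ℕ) : ∀ u v : ℕ, v < 2^a → s2 (2^a * u + v) = s2 u + s2 v := by
  induction a with
  | zero =>
    intro u v hv
    have hv0 : v = 0 := Nat.lt_one_iff.mp (by simpa using hv)
    subst hv0
    simp [s2_zero]
  | succ a ih =>
    intro u v hv
    have hv2 : v / 2 < 2^a := by
      have : (2:ℕ)^(a+1) = 2*2^a := by ring
      omega
    rcases Nat.mod_two_eq_zero_or_one v with hp | hp
    · have hexp : 2^(a+1) * u + v = 2*(2^a*u + v/2) := by
        have h' : 2^(a+1) * u = 2*(2^a*u) := by ring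
        omega
      rw [hexp, s2_two_mul, ih u (v/2) hv2, s2_of_even v hp]
    · have hexp : 2^(a+1) * u + v = 2*(2^a*u + v/2) + 1 := by
        have h' : 2^(a+1) * u = 2*(2^a*u) := by ring
        omega
      rw [hexp, s2_two_mul_add_one, ih u (v/2) hv2, s2_of_odd v hp]
      omega

lemma s2_pow_sub_one (d : ℕ) : s2 (2^d - 1) = d := by
  induction d with
  | zero => simp [s2_zero]
  | succ d ih =>
    have h1 : (1:ℕ) ≤ 2^d := Nat.one_le_two_pow
    have : 2^(d+1) - 1 = 2*(2^d - 1) + 1 := by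
      have : (2:ℕ)^(d+1) = 2*2^d := by ring
      omega
    rw [this, s2_two_mul_add_one, ih]

lemma s2_succ_le (n : ℕ) : s2 (n+1) ≤ s2 n + 1 := by
  induction n using Nat.strong_induction_on with
  | _ n ih =>
    rcases Nat.mod_two_eq_zero_or_one n with hp | hp
    · have h1 : (n+1) % 2 = 1 := by omega
      have h2 : (n+1) / 2 = n/2 := by omega
      rw [s2_of_odd (n+1) h1, h2, ← s2_of_even n hp]
    · have h1 : (n+1) % 2 = 0 := by omega
      have h2 : (n+1) / 2 = n/2 + 1 := by omega
      have hlt : n/2 < n := by omega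
      calc s2 (n+1) = s2 (n/2 + 1) := by rw [s2_of_even (n+1) h1, h2]
        _ ≤ s2 (n/2) + 1 := ih _ hlt
        _ = s2 n := by rw [← s2_of_odd n hp]
        _ ≤ s2 n + 1 := Nat.le_succ _

lemma s2_add_pow_le (a : ℕ) : ∀ x : ℕ, s2 (x + 2^a) ≤ s2 x + 1 := by
  induction a with
  | zero => intro x; exact s2_succ_le x
  | succ a ih =>
    intro x
    have hpow : (2:ℕ)^(a+1) = 2*2^a := by ring
    rcases Nat.mod_two_eq_zero_or_one x with hp | hp
    · have h1 : (x + 2^(a+1)) % 2 = 0 := by omega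
      have h2 : (x + 2^(a+1)) / 2 = x/2 + 2^a := by omega
      calc s2 (x + 2^(a+1)) = s2 (x/2 + 2^a) := by rw [s2_of_even _ h1, h2]
        _ ≤ s2 (x/2) + 1 := ih _
        _ = s2 x + 1 := by rw [← s2_of_even x hp]
    · have h1 : (x + 2^(a+1)) % 2 = 1 := by omega
      have h2 : (x + 2^(a+1)) / 2 = x/2 + 2^a := by omega
      calc s2 (x + 2^(a+1)) = s2 (x/2 + 2^a) + 1 := by rw [s2_of_odd _ h1, h2]
        _ ≤ (s2 (x/2) + 1) + 1 := by have := ih (x/2); omega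
        _ = s2 x + 1 := by rw [← s2_of_odd x hp]

/-- potential: minimal number of powers of two, each at most `2^k`, needed to sum to `X` -/
def phi (k X : ℕ) : ℕ := X / 2^k + s2 (X % 2^k)

lemma phi_eval (k q r : ℕ) (h : r < 2^k) : phi k (2^k * q + r) = q + s2 r := by
  unfold phi
  have hpos : (0:ℕ) < 2^k := Nat.pos_of_ne_zero (by positivity)
  have h1 : (2^k * q + r) / 2^k = q := by
    rw [Nat.mul_add_div hpos, Nat.div_eq_of_lt h]
    omega
  have h2 : (2^k * q + r) % 2^k = r := by
    rw [Nat.mul_add_mod, Nat.mod_eq_of_lt h]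
  rw [h1, h2]

lemma phi_add_pow_le (k a : ℕ) (ha : a ≤ k) (Y : ℕ) : phi k (Y + 2^a) ≤ phi k Y + 1 := by
  have hkpos : (0:ℕ) < 2^k := Nat.pos_of_ne_zero (by positivity)
  obtain ⟨q, r, hrlt, rfl⟩ : ∃ q r, r < 2^k ∧ Y = 2^k*q + r :=
    ⟨Y/2^k, Y%2^k, Nat.mod_lt _ hkpos, (Nat.div_add_mod Y (2^k)).symm⟩
  rw [phi_eval k q r hrlt]
  rcases eq_or_lt_of_le ha with rfl | hak
  · have h1 : 2^a*q + r + 2^a = 2^a*(q+1) + r := by ring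
    rw [h1, phi_eval _ _ _ hrlt]
    omega
  · by_cases hc : r + 2^a < 2^k
    · have h1 : 2^k*q + r + 2^a = 2^k*q + (r + 2^a) := by ring
      rw [h1, phi_eval _ _ _ hc]
      have := s2_add_pow_le a r
      omega
    · push_neg at hc
      have hB : (1:ℕ) ≤ 2^(k-a) := Nat.one_le_two_pow
      have hapos : (0:ℕ) < 2^a := Nat.pos_of_ne_zero (by positivity)
      have hAB : 2^a * 2^(k-a) = 2^k := by rw [← pow_add]; congr 1; omega
      have hCA : 2^a * (2^(k-a) - 1) + 2^a = 2^k := by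
        have h' : (2^(k-a) - 1) + 1 = 2^(k-a) := by omega
        calc 2^a*(2^(k-a)-1) + 2^a = 2^a*((2^(k-a)-1)+1) := by ring
          _ = 2^a*2^(k-a) := by rw [h']
          _ = 2^k := hAB
      set r'' := r + 2^a - 2^k with hr''def
      have hr''lt : r'' < 2^a := by omega
      have hrdec : r = 2^a * (2^(k-a) - 1) + r'' := by omega
      have hs2r : s2 r = (k - a) + s2 r'' := by
        rw [hrdec, s2_pow_mul_add a _ r'' hr''lt, s2_pow_sub_one]
      have hYdec : 2^k*q + r + 2^a = 2^k * (q+1) + r'' := by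
        have h5 : 2^k*(q+1) = 2^k*q + 2^k := by ring
        omega
      rw [hYdec, phi_eval _ _ _ (by omega)]
      omega

lemma phi_add_pow_mul_le (k a : ℕ) (ha : a ≤ k) (Y m : ℕ) :
    phi k (Y + 2^a * m) ≤ phi k Y + m := by
  induction m with
  | zero => simp
  | succ m ih =>
    have h1 : Y + 2^a * (m+1) = (Y + 2^a * m) + 2^a := by ring
    rw [h1]
    calc phi k ((Y + 2^a * m) + 2^a) ≤ phi k (Y + 2^a * m) + 1 := phi_add_pow_le k a ha _
      _ ≤ phi k Y + m + 1 := by omega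

lemma phi_add_le (k Y d : ℕ) : phi k (Y + d) ≤ phi k Y + d := by
  have := phi_add_pow_mul_le k 0 (Nat.zero_le k) Y d
  simpa using this

lemma phi_sum_le (k : ℕ) (s : Finset ℕ) (f m : ℕ → ℕ) (hf : ∀ i ∈ s, f i ≤ k) :
    phi k (∑ i ∈ s, 2^(f i) * m i) ≤ ∑ i ∈ s, m i := by
  induction s using Finset.induction_on with
  | empty => simp [phi, s2_zero]
  | @insert a t hx ih =>
    rw [Finset.sum_insert hx, Finset.sum_insert hx]
    have h1 : ∀ i ∈ t, f i ≤ k := fun i hi => hf i (Finset.mem_insert_of_mem hi)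
    calc phi k (2^(f a) * m a + ∑ i ∈ t, 2^(f i) * m i)
        = phi k ((∑ i ∈ t, 2^(f i) * m i) + 2^(f a) * m a) := by rw [add_comm]
      _ ≤ phi k (∑ i ∈ t, 2^(f i) * m i) + m a :=
          phi_add_pow_mul_le k (f a) (hf a (Finset.mem_insert_self a t)) _ _
      _ ≤ (∑ i ∈ t, m i) + m a := by have := ih h1; omega
      _ = m a + ∑ i ∈ t, m i := by omega

/-- Lemma 3.8: in any solution of
`(e-1)·2^e + 2 = 2^(e+1)·h + ∑_{i=1}^e (2^e - 2^(e-i))·m_i`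
the multiplicity `m_e` is even and less than `4`. -/
theorem stmt13 (e : ℕ) (he : 5 ≤ e) (h : ℕ) (m : ℕ → ℕ)
    (heq : (e - 1) * 2 ^ e + 2 =
      2 ^ (e + 1) * h + ∑ i ∈ Finset.Icc 1 e, (2 ^ e - 2 ^ (e - i)) * m i) :
    Even (m e) ∧ m e < 4 := by
  obtain ⟨e', rfl⟩ : ∃ e', e = e' + 1 := ⟨e - 1, by omega⟩
  have he' : 4 ≤ e' := by omega
  set N := ∑ i ∈ Finset.Icc 1 (e'+1), 2^(e'+1-i) * m i with hNdef
  set M := ∑ i ∈ Finset.Icc 1 (e'+1), m i with hMdef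
  have key : e'*2^(e'+1) + 2 + N = 2^(e'+1+1)*h + 2^(e'+1)*M := by
    have hterm : ∀ i ∈ Finset.Icc 1 (e'+1),
        (2^(e'+1) - 2^(e'+1-i))*m i + 2^(e'+1-i)*m i = 2^(e'+1) * m i := by
      intro i hi
      have hle : 2^(e'+1-i) ≤ 2^(e'+1) :=
        Nat.pow_le_pow_right (by norm_num) (Nat.sub_le _ _)
      rw [← add_mul, Nat.sub_add_cancel hle]
    calc e'*2^(e'+1) + 2 + N
        = (e'+1-1)*2^(e'+1) + 2 + N := by norm_num
      _ = (2^(e'+1+1)*h + ∑ i ∈ Finset.Icc 1 (e'+1), (2^(e'+1) - 2^(e'+1-i))*m i) + N := by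
          rw [← heq]
      _ = 2^(e'+1+1)*h + ∑ i ∈ Finset.Icc 1 (e'+1),
            ((2^(e'+1) - 2^(e'+1-i))*m i + 2^(e'+1-i)*m i) := by
          rw [add_assoc, ← Finset.sum_add_distrib]
      _ = 2^(e'+1+1)*h + ∑ i ∈ Finset.Icc 1 (e'+1), 2^(e'+1) * m i := by
          rw [Finset.sum_congr rfl hterm]
      _ = 2^(e'+1+1)*h + 2^(e'+1)*M := by rw [← Finset.mul_sum]
  have hdvd : 2^(e'+1) ∣ N + 2 := by
    have h1 : 2^(e'+1) ∣ 2^(e'+1+1)*h + 2^(e'+1)*M := ⟨2*h + M, by ring⟩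
    have h2 : 2^(e'+1) ∣ e'*2^(e'+1) := dvd_mul_left _ _
    have h3 : N + 2 = 2^(e'+1+1)*h + 2^(e'+1)*M - e'*2^(e'+1) := by omega
    rw [h3]; exact Nat.dvd_sub h1 h2
  obtain ⟨T, hT⟩ := hdvd
  have hTpos : T ≠ 0 := by
    rintro rfl
    rw [mul_zero] at hT
    omega
  obtain ⟨T', rfl⟩ : ∃ T', T = T' + 1 := ⟨T - 1, by omega⟩
  have hTM : T' + 1 + e' = 2*h + M := by
    have h3 : 2^(e'+1) * (T'+1+e') = 2^(e'+1) * (2*h+M) := by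
      calc 2^(e'+1) * (T'+1+e') = (N+2) + e'*2^(e'+1) := by rw [hT]; ring
        _ = 2^(e'+1+1)*h + 2^(e'+1)*M := by omega
        _ = 2^(e'+1) * (2*h+M) := by rw [pow_succ]; ring
    exact Nat.eq_of_mul_eq_mul_left (Nat.pos_of_ne_zero (by positivity)) h3
  -- decompose N and M
  set R := ∑ i ∈ Finset.Icc 1 e', 2^(e'-i) * m i with hRdef
  set M' := ∑ i ∈ Finset.Icc 1 e', m i with hM'def
  have hNsplit : N = 2*R + m (e'+1) := by
    rw [hNdef, Finset.sum_Icc_succ_top (by omega)]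
    have h1 : ∑ i ∈ Finset.Icc 1 e', 2^(e'+1-i) * m i = 2*R := by
      rw [hRdef, Finset.mul_sum]
      apply Finset.sum_congr rfl
      intro i hi
      simp only [Finset.mem_Icc] at hi
      have h2 : e'+1-i = (e'-i)+1 := by omega
      rw [h2, pow_succ]
      ring
    rw [h1]
    simp
  have hMsplit : M = M' + m (e'+1) := by
    rw [hMdef, hM'def, Finset.sum_Icc_succ_top (by omega)]
  -- m (e'+1) is even
  have hc : N + 2 = 2*(2^e' * (T'+1)) := by rw [hT, pow_succ]; ring
  have heven : 2 ∣ m (e'+1) := by omega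
  obtain ⟨n, hn⟩ := heven
  have hEven : Even (m (e'+1)) := ⟨n, by omega⟩
  have hR : R + n + 1 = 2^e' * (T'+1) := by omega
  rcases Nat.lt_or_ge n 2 with hlt | hge
  · exact ⟨hEven, by omega⟩
  exfalso
  have hcount : phi (e'-1) R ≤ M' := by
    apply phi_sum_le
    intro i hi
    simp only [Finset.mem_Icc] at hi
    omega
  have hstep : phi (e'-1) (R + (n-2)) ≤ phi (e'-1) R + (n-2) := phi_add_le _ _ _
  have h4 : (4:ℕ) ≤ 2^(e'-1) := by
    calc (4:ℕ) = 2^2 := by norm_num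
      _ ≤ 2^(e'-1) := Nat.pow_le_pow_right (by norm_num) (by omega)
  have hval : R + (n-2) = 2^(e'-1)*(2*T'+1) + (2^(e'-1) - 3) := by
    have h1 : (2:ℕ)^e' = 2^(e'-1)*2 := by rw [← pow_succ]; congr 1; omega
    have h2 : 2^e' * (T'+1) = 2*(2^(e'-1)*T') + 2*2^(e'-1) := by rw [h1]; ring
    have h3 : 2^(e'-1)*(2*T'+1) = 2*(2^(e'-1)*T') + 2^(e'-1) := by ring
    omega
  have heval : phi (e'-1) (R + (n-2)) = (2*T'+1) + s2 (2^(e'-1) - 3) := by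
    rw [hval, phi_eval _ _ _ (by omega)]
  have hs2 : s2 (2^(e'-1) - 3) = e' - 2 := by
    have h16 : (2:ℕ)^(e'-1) = 4*2^(e'-3) := by
      have h4' : (4:ℕ) = 2^2 := by norm_num
      rw [h4', ← pow_add]; congr 1; omega
    have hd : (1:ℕ) ≤ 2^(e'-3) := Nat.one_le_two_pow
    have hdec : 2^(e'-1) - 3 = 2^2*(2^(e'-3) - 1) + 1 := by
      have h22 : (2:ℕ)^2 = 4 := by norm_num
      rw [h22]; omega
    rw [hdec, s2_pow_mul_add 2 _ 1 (by norm_num), s2_pow_sub_one, s2_one]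
    omega
  omega
end

section
/- Let e ≥ 5. If nonnegative integers h, m_1, …, m_e satisfy (e−1)·2^e + 2 = 2^{e+1}·h + ∑_{i=1}^e (2^e − 2^{e−i})·m_i and m_e = 2, then necessarily h = 0, m_{e−1} = 0, and m_i = 1 for all 1 ≤ i ≤ e−2. -/
lemma lemC : ∀ n : ℕ, ∀ K H : ℕ, ∀ c : ℕ → ℕ, 1 ≤ n →
    (∑ j ∈ Finset.range n, 2 ^ (j + 1) * c j) + 2 = (K + 1) * 2 ^ (n + 1) →
    (∑ j ∈ Finset.range n, c j) + 2 * H ≤ n + K →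
    K = 0 ∧ H = 0 ∧ ∀ j < n, c j = 1 := by
  intro n
  induction n with
  | zero => intro K H c hn; omega
  | succ n IH =>
    intro K H c _ hsum hmass
    rcases Nat.eq_zero_or_pos n with hn0 | hn1
    · subst hn0
      simp [Finset.sum_range_one] at hsum hmass
      refine ⟨by omega, by omega, ?_⟩
      intro j hj
      interval_cases j
      omega
    · obtain ⟨m, rfl⟩ : ∃ m, n = m + 1 := ⟨n - 1, by omega⟩
      rw [Finset.sum_range_succ', Finset.sum_range_succ'] at hsum hmass
      norm_num at hsum hmass
      set A : ℕ := ∑ k ∈ Finset.range m, 2 ^ (k + 1 + 1) * c (k + 1 + 1) with hAdef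
      set A' : ℕ := ∑ k ∈ Finset.range m, c (k + 1 + 1) with hA'def
      have hA : ∑ k ∈ Finset.range m, 2 ^ (k + 1 + 1 + 1) * c (k + 1 + 1) = 2 * A := by
        rw [hAdef, Finset.mul_sum]
        exact Finset.sum_congr rfl fun j _ => by ring
      rw [hA] at hsum
      set X : ℕ := (K + 1) * 2 ^ (m + 1 + 1) with hXdef
      have hpow : (K + 1) * 2 ^ (m + 1 + 1 + 1) = 2 * X := by rw [hXdef]; ring
      rw [hpow] at hsum
      have hAeven : 2 ∣ A := Finset.dvd_sum fun j _ => ⟨2 ^ (j + 1) * c (j + 1 + 1), by ring⟩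
      have hXeven : 2 ∣ X := ⟨(K + 1) * 2 ^ (m + 1), by rw [hXdef]; ring⟩
      have hodd : c 0 % 2 = 1 := by omega
      set c' : ℕ := c 0 / 2 with hc'def
      have hc0 : c 0 = 2 * c' + 1 := by omega
      set d : ℕ → ℕ := fun j => if j = 0 then c' + c 1 else c (j + 1) with hd
      have hdA : ∑ k ∈ Finset.range m, 2 ^ (k + 1 + 1) * d (k + 1) = A := by
        rw [hAdef]
        exact Finset.sum_congr rfl fun j _ => by simp [hd]
      have hdA' : ∑ k ∈ Finset.range m, d (k + 1) = A' := by
        rw [hA'def]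
        exact Finset.sum_congr rfl fun j _ => by simp [hd]
      have hdsum : (∑ j ∈ Finset.range (m + 1), 2 ^ (j + 1) * d j) + 2 = (K + 1) * 2 ^ (m + 1 + 1) := by
        rw [Finset.sum_range_succ', hdA, ← hXdef]
        have : d 0 = c' + c 1 := by simp [hd]
        rw [this]
        simp only [pow_one, zero_add]
        omega
      have hdmass : (∑ j ∈ Finset.range (m + 1), d j) + 2 * H ≤ (m + 1) + K := by
        rw [Finset.sum_range_succ', hdA']
        have : d 0 = c' + c 1 := by simp [hd]
        rw [this]
        omega
      obtain ⟨hK, hH, hdone⟩ := IH K H d (by omega) hdsum hdmass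
      have hd0 : c' + c 1 = 1 := by
        have := hdone 0 (by omega)
        simpa [hd] using this
      have hcj : ∀ j, 2 ≤ j → j ≤ m + 1 → c j = 1 := by
        intro j h2 hjm
        have h := hdone (j - 1) (by omega)
        have hne : (j - 1) ≠ 0 := by omega
        rw [hd] at h
        simp only [if_neg hne] at h
        rwa [Nat.sub_add_cancel (by omega)] at h
      have hAval : A' = m := by
        rw [hA'def]
        rw [Finset.sum_congr rfl fun j hj => hcj (j + 1 + 1) (by omega)
          (by simp only [Finset.mem_range] at hj; omega)]
        simp
      have hc'0 : c' = 0 := by omega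
      refine ⟨hK, by omega, ?_⟩
      intro j hj
      rcases Nat.lt_or_ge j 2 with h2 | h2
      · interval_cases j
        · omega
        · omega
      · exact hcj j h2 (by omega)

lemma lemB (n K H : ℕ) (c : ℕ → ℕ) (hn : 2 ≤ n)
    (hsum : (∑ j ∈ Finset.range n, 2 ^ (j + 1) * c j) + 4 = (K + 1) * 2 ^ (n + 1))
    (hmass : (∑ j ∈ Finset.range n, c j) + 2 * H + 1 ≤ n + K) :
    K = 0 ∧ H = 0 ∧ c 0 = 0 ∧ ∀ j, 1 ≤ j → j < n → c j = 1 := by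
  obtain ⟨m, rfl⟩ : ∃ m, n = m + 1 + 1 := ⟨n - 2, by omega⟩
  rw [Finset.sum_range_succ', Finset.sum_range_succ'] at hsum hmass
  norm_num at hsum hmass
  set A : ℕ := ∑ k ∈ Finset.range m, 2 ^ (k + 1 + 1) * c (k + 1 + 1) with hAdef
  set A' : ℕ := ∑ k ∈ Finset.range m, c (k + 1 + 1) with hA'def
  have hA : ∑ k ∈ Finset.range m, 2 ^ (k + 1 + 1 + 1) * c (k + 1 + 1) = 2 * A := by
    rw [hAdef, Finset.mul_sum]
    exact Finset.sum_congr rfl fun j _ => by ring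
  rw [hA] at hsum
  set X : ℕ := (K + 1) * 2 ^ (m + 1 + 1) with hXdef
  have hpow : (K + 1) * 2 ^ (m + 1 + 1 + 1) = 2 * X := by rw [hXdef]; ring
  rw [hpow] at hsum
  have hAeven : 2 ∣ A := Finset.dvd_sum fun j _ => ⟨2 ^ (j + 1) * c (j + 1 + 1), by ring⟩
  have hXeven : 2 ∣ X := ⟨(K + 1) * 2 ^ (m + 1), by rw [hXdef]; ring⟩
  have heven : c 0 % 2 = 0 := by omega
  set c' : ℕ := c 0 / 2 with hc'def
  have hc0 : c 0 = 2 * c' := by omega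
  set d : ℕ → ℕ := fun j => if j = 0 then c' + c 1 else c (j + 1) with hd
  have hdA : ∑ k ∈ Finset.range m, 2 ^ (k + 1 + 1) * d (k + 1) = A := by
    rw [hAdef]
    exact Finset.sum_congr rfl fun j _ => by simp [hd]
  have hdA' : ∑ k ∈ Finset.range m, d (k + 1) = A' := by
    rw [hA'def]
    exact Finset.sum_congr rfl fun j _ => by simp [hd]
  have hdsum : (∑ j ∈ Finset.range (m + 1), 2 ^ (j + 1) * d j) + 2 = (K + 1) * 2 ^ (m + 1 + 1) := by
    rw [Finset.sum_range_succ', hdA, ← hXdef]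
    have : d 0 = c' + c 1 := by simp [hd]
    rw [this]
    simp only [pow_one, zero_add]
    omega
  have hdmass : (∑ j ∈ Finset.range (m + 1), d j) + 2 * H ≤ (m + 1) + K := by
    rw [Finset.sum_range_succ', hdA']
    have : d 0 = c' + c 1 := by simp [hd]
    rw [this]
    omega
  obtain ⟨hK, hH, hdone⟩ := lemC (m + 1) K H d (by omega) hdsum hdmass
  have hd0 : c' + c 1 = 1 := by
    have := hdone 0 (by omega)
    simpa [hd] using this
  have hcj : ∀ j, 2 ≤ j → j ≤ m + 1 → c j = 1 := by
    intro j h2 hjm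
    have h := hdone (j - 1) (by omega)
    have hne : (j - 1) ≠ 0 := by omega
    rw [hd] at h
    simp only [if_neg hne] at h
    rwa [Nat.sub_add_cancel (by omega)] at h
  have hAval : A' = m := by
    rw [hA'def]
    rw [Finset.sum_congr rfl fun j hj => hcj (j + 1 + 1) (by omega)
      (by simp only [Finset.mem_range] at hj; omega)]
    simp
  have hc'0 : c' = 0 := by omega
  refine ⟨hK, by omega, by omega, ?_⟩
  intro j h1 hj
  rcases Nat.lt_or_ge j 2 with h2 | h2
  · interval_cases j
    omega
  · exact hcj j h2 (by omega)


/-- Lemma 3.9: if `(e-1)·2^e + 2 = 2^(e+1)·h + ∑_{i=1}^e (2^e - 2^(e-i))·m_i`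
and `m_e = 2`, then `h = 0`, `m_{e-1} = 0` and `m_i = 1` for `1 ≤ i ≤ e-2`. -/
theorem stmt14 (e : ℕ) (he : 5 ≤ e) (h : ℕ) (m : ℕ → ℕ)
    (heq : (e - 1) * 2 ^ e + 2 =
      2 ^ (e + 1) * h + ∑ i ∈ Finset.Icc 1 e, (2 ^ e - 2 ^ (e - i)) * m i)
    (hme : m e = 2) :
    h = 0 ∧ m (e - 1) = 0 ∧ ∀ i, 1 ≤ i → i ≤ e - 2 → m i = 1 := by
  obtain ⟨n, rfl⟩ : ∃ n, e = n + 1 := ⟨e - 1, by omega⟩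
  have hn : 4 ≤ n := by omega
  simp only [Nat.add_sub_cancel] at heq ⊢
  -- key additive identity
  set S : ℕ := ∑ i ∈ Finset.Icc 1 (n + 1), (2 ^ (n + 1) - 2 ^ (n + 1 - i)) * m i with hSdef
  set U : ℕ := ∑ i ∈ Finset.Icc 1 (n + 1), 2 ^ (n + 1 - i) * m i with hUdef
  set M' : ℕ := ∑ i ∈ Finset.Icc 1 (n + 1), m i with hM'def
  have key : S + U = 2 ^ (n + 1) * M' := by
    rw [hSdef, hUdef, hM'def, ← Finset.sum_add_distrib, Finset.mul_sum]
    refine Finset.sum_congr rfl fun i hi => ?_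
    have hle : (2:ℕ) ^ (n + 1 - i) ≤ 2 ^ (n + 1) := Nat.pow_le_pow_right (by norm_num) (by omega)
    rw [← add_mul, Nat.sub_add_cancel hle]
  -- split top terms
  have hUsplit : U = (∑ i ∈ Finset.Icc 1 n, 2 ^ (n + 1 - i) * m i) + 2 := by
    rw [hUdef, Finset.sum_Icc_succ_top (by omega)]
    rw [Nat.sub_self, pow_zero, one_mul, hme]
  have hMsplit : M' = (∑ i ∈ Finset.Icc 1 n, m i) + 2 := by
    rw [hM'def, Finset.sum_Icc_succ_top (by omega), hme]
  -- reindex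
  set c : ℕ → ℕ := fun j => m (n - j) with hc
  have hre : ∑ i ∈ Finset.Icc 1 n, 2 ^ (n + 1 - i) * m i
      = ∑ j ∈ Finset.range n, 2 ^ (j + 1) * c j := by
    rw [← Finset.Ico_add_one_right_eq_Icc, Finset.sum_Ico_eq_sum_range]
    rw [← Finset.sum_range_reflect (fun j => 2 ^ (j + 1) * c j) n]
    refine Finset.sum_congr (by congr 1) fun j hj => ?_
    simp only [Finset.mem_range] at hj
    simp only [hc]
    rw [show n + 1 - (1 + j) = n - 1 - j + 1 by omega,
      show 1 + j = n - (n - 1 - j) by omega]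
  have hre' : ∑ i ∈ Finset.Icc 1 n, m i = ∑ j ∈ Finset.range n, c j := by
    rw [← Finset.Ico_add_one_right_eq_Icc, Finset.sum_Ico_eq_sum_range]
    rw [← Finset.sum_range_reflect (fun j => c j) n]
    refine Finset.sum_congr (by congr 1) fun j hj => ?_
    simp only [Finset.mem_range] at hj
    simp only [hc]
    rw [show 1 + j = n - (n - 1 - j) by omega]
  set T : ℕ := ∑ j ∈ Finset.range n, 2 ^ (j + 1) * c j with hTdef
  set M : ℕ := ∑ j ∈ Finset.range n, c j with hMdef
  rw [hre] at hUsplit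
  rw [hre'] at hMsplit
  set P : ℕ := 2 ^ (n + 1) with hPdef
  -- main additive equation
  have main : n * P + 4 + T = 2 * P * h + P * M + 2 * P := by
    have h2 : (2:ℕ) ^ (n + 1 + 1) * h = 2 * P * h := by rw [hPdef]; ring
    have h3 : P * M' = P * M + 2 * P := by rw [hMsplit]; ring
    omega
  have hBP : 2 * P * h + P * M + 2 * P = P * (2 * h + M + 2) := by ring
  have hgt : n < 2 * h + M + 2 := by
    by_contra hle
    push_neg at hle
    have h1 : P * (2 * h + M + 2) ≤ P * n := Nat.mul_le_mul_left P hle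
    have h2 : P * n = n * P := mul_comm _ _
    omega
  set K : ℕ := 2 * h + M + 2 - (n + 1) with hKdef
  have hK1 : (K + 1) + n = 2 * h + M + 2 := by omega
  have hx : (K + 1) * P + n * P = P * (2 * h + M + 2) := by
    rw [← add_mul, hK1, mul_comm]
  have hsum : T + 4 = (K + 1) * P := by omega
  have hmass : M + 2 * h + 1 ≤ n + K := by omega
  obtain ⟨hK0, hh0, hc0, hcj⟩ := lemB n K h c (by omega) (by rw [← hPdef]; exact hsum) hmass
  refine ⟨hh0, ?_, ?_⟩
  · have : c 0 = m n := by simp [hc]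
    rw [← this]; exact hc0
  · intro i h1 hi
    have h2 : i ≤ n - 1 := by omega
    have := hcj (n - i) (by omega) (by omega)
    simp only [hc] at this
    rwa [show n - (n - i) = i by omega] at this
end

section
/- Let e ≥ 5. If nonnegative integers h, m_1, …, m_e satisfy (e−1)·2^e + 2 = 2^{e+1}·h + ∑_{i=1}^e (2^e − 2^{e−i})·m_i and m_e = 0, then necessarily h = 0 and m_1 ≤ 3. -/
open Finset

/-- Key counting lemma: if `∑_{j<t+1} 2^j n_j + 1 = K·2^(t+1)` then
`2K + t ≤ ∑ n_j + 1`. -/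
lemma stmt15_keyQ (t : ℕ) : ∀ (K : ℕ) (n : ℕ → ℕ),
    (∑ j ∈ range (t+1), 2^j * n j) + 1 = K * 2^(t+1) →
    2*K + t ≤ (∑ j ∈ range (t+1), n j) + 1 := by
  induction t with
  | zero =>
    intro K n h
    rw [Finset.sum_range_one] at h
    rw [Finset.sum_range_one]
    norm_num at h
    omega
  | succ t ih =>
    intro K n h
    rw [Finset.sum_range_succ'] at h
    obtain ⟨c, hc⟩ : (2:ℕ) ∣ ∑ j ∈ range (t+1), 2^(j+1) * n (j+1) :=
      Finset.dvd_sum fun j _ => dvd_mul_of_dvd_left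
        (dvd_pow_self 2 (Nat.succ_ne_zero j)) _
    rw [hc] at h
    have hpow : K * 2^(t+1+1) = 2 * (K * 2^(t+1)) := by ring
    rw [hpow] at h
    simp only [pow_zero, one_mul] at h
    set X := K * 2^(t+1) with hX
    -- h : 2*c + n 0 + 1 = 2*X
    obtain ⟨a, ha⟩ : ∃ a, n 0 = 2*a + 1 := ⟨n 0 / 2, by omega⟩
    have hc2 : c + a + 1 = X := by omega
    -- rewrite c as half of the sum: c = ∑ 2^j * n (j+1)
    have hcval : 2 * c = 2 * ∑ j ∈ range (t+1), 2^j * n (j+1) := by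
      rw [← hc, Finset.mul_sum]
      exact Finset.sum_congr rfl fun j _ => by ring
    have hcval' : c = ∑ j ∈ range (t+1), 2^j * n (j+1) := by omega
    -- apply IH with modified function
    set f : ℕ → ℕ := fun j => if j = 0 then n 1 + a else n (j+1) with hf
    have hsum1 : ∑ j ∈ range (t+1), 2^j * f j
        = (∑ j ∈ range (t+1), 2^j * n (j+1)) + a := by
      rw [Finset.sum_range_succ', Finset.sum_range_succ' (fun j => 2^j * n (j+1))]
      simp only [hf, pow_zero, one_mul, if_pos rfl]
      have he : ∀ j ∈ range t, 2^(j+1) * (if j+1 = 0 then n 1 + a else n (j+1+1))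
          = 2^(j+1) * n (j+1+1) := by
        intro j _
        simp
      rw [Finset.sum_congr rfl he]
      ring
    have hIH := ih K f (by rw [hsum1, ← hcval', hc2])
    have hsum2 : ∑ j ∈ range (t+1), f j = (∑ j ∈ range (t+1), n (j+1)) + a := by
      rw [Finset.sum_range_succ', Finset.sum_range_succ' (fun j => n (j+1))]
      simp only [hf, if_pos rfl]
      have he : ∀ j ∈ range t, (if j+1 = 0 then n 1 + a else n (j+1+1)) = n (j+1+1) := by
        intro j _
        simp
      rw [Finset.sum_congr rfl he]
      ring
    rw [hsum2] at hIH
    rw [Finset.sum_range_succ' n]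
    omega

/-- Lemma 3.10: if `(e-1)·2^e + 2 = 2^(e+1)·h + ∑_{i=1}^e (2^e - 2^(e-i))·m_i`
and `m_e = 0`, then `h = 0` and `m_1 ≤ 3`. -/
theorem stmt15 (e : ℕ) (he : 5 ≤ e) (h : ℕ) (m : ℕ → ℕ)
    (heq : (e - 1) * 2 ^ e + 2 =
      2 ^ (e + 1) * h + ∑ i ∈ Finset.Icc 1 e, (2 ^ e - 2 ^ (e - i)) * m i)
    (hme : m e = 0) :
    h = 0 ∧ m 1 ≤ 3 := by
  obtain ⟨d, rfl⟩ : ∃ d, e = d + 5 := ⟨e - 5, by omega⟩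
  set e := d + 5 with hedef
  set S := ∑ i ∈ Finset.Icc 1 e, 2^(e-i) * m i with hS
  set M := ∑ i ∈ Finset.Icc 1 e, m i with hM
  -- step 1: ∑ (2^e - 2^(e-i)) m i + S = 2^e * M
  have hstep1 : (∑ i ∈ Finset.Icc 1 e, (2 ^ e - 2 ^ (e - i)) * m i) + S = 2^e * M := by
    rw [hS, hM, ← Finset.sum_add_distrib, Finset.mul_sum]
    refine Finset.sum_congr rfl fun i hi => ?_
    have hle : (2:ℕ)^(e-i) ≤ 2^e := Nat.pow_le_pow_right (by norm_num) (Nat.sub_le e i)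
    rw [← Nat.add_mul, Nat.sub_add_cancel hle]
  -- step 2: equation form
  have hE : (e - 1) * 2 ^ e + 2 + S = 2^(e+1)*h + 2^e * M := by omega
  -- step 3: S + 2 = 2^e * (2h + M - (e-1)); get K
  have hE2 : (e - 1) * 2 ^ e + (2 + S) = 2^e * (2*h + M) := by
    have hp : (2:ℕ)^(e+1)*h + 2^e*M = 2^e * (2*h + M) := by ring
    omega
  have hTgt : e - 1 < 2*h + M := by
    by_contra hcon
    push_neg at hcon
    have h1 : 2^e * (2*h+M) ≤ 2^e * (e-1) := Nat.mul_le_mul_left _ hcon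
    have h2 : 2^e * (e-1) = (e-1) * 2^e := Nat.mul_comm _ _
    omega
  obtain ⟨K, hKdef⟩ : ∃ K, 2*h + M = (e-1) + (K + 1) := ⟨2*h + M - e, by omega⟩
  have hSK : 2 + S = 2 * ((K+1) * 2^(d+4)) := by
    have h1 : 2^e * (2*h+M) = (e-1) * 2^e + 2 * ((K+1) * 2^(d+4)) := by
      rw [hKdef, hedef]; ring
    omega
  -- step 4: reindex S and M over range (d+4)
  have hSre : S = 2 * ∑ j ∈ range (d+4), 2^j * m (d+4-j) := by
    rw [hS, ← Finset.Ico_add_one_right_eq_Icc, Finset.sum_Ico_eq_sum_range]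
    simp only [Nat.add_sub_cancel]
    rw [← Finset.sum_range_reflect]
    rw [show e = d + 5 from rfl]
    rw [Finset.sum_range_succ'
      (fun j => 2 ^ (d + 5 - (1 + (d + 5 - 1 - j))) * m (1 + (d + 5 - 1 - j)))]
    have h0 : 1 + (d + 5 - 1 - 0) = d + 5 := by omega
    rw [Finset.mul_sum]
    have hz : 2 ^ (d + 5 - (1 + (d + 5 - 1 - 0))) * m (1 + (d + 5 - 1 - 0)) = 0 := by
      rw [h0, hme]; ring
    rw [hz, Nat.add_zero]
    refine Finset.sum_congr rfl fun j hj => ?_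
    have hj' : j < d + 4 := Finset.mem_range.mp hj
    have h1 : 1 + (d + 5 - 1 - (j+1)) = d + 4 - j := by omega
    rw [h1]
    have h2 : d + 5 - (d + 4 - j) = j + 1 := by omega
    rw [h2, pow_succ]
    ring
  have hMre : M = ∑ j ∈ range (d+4), m (d+4-j) := by
    rw [hM, ← Finset.Ico_add_one_right_eq_Icc, Finset.sum_Ico_eq_sum_range]
    simp only [Nat.add_sub_cancel]
    rw [← Finset.sum_range_reflect]
    rw [show e = d + 5 from rfl]
    rw [Finset.sum_range_succ' (fun j => m (1 + (d + 5 - 1 - j)))]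
    have h0 : 1 + (d + 5 - 1 - 0) = d + 5 := by omega
    rw [h0, hme, Nat.add_zero]
    refine Finset.sum_congr rfl fun j hj => ?_
    have hj' : j < d + 4 := Finset.mem_range.mp hj
    have h1 : 1 + (d + 5 - 1 - (j+1)) = d + 4 - j := by omega
    rw [h1]
  -- step 5: apply key lemma with t = d+3
  rw [hSre] at hSK
  have hkeyhyp : (∑ j ∈ range (d+3+1), 2^j * m (d+4-j)) + 1 = (K+1) * 2^(d+3+1) := by
    have hr : d + 3 + 1 = d + 4 := rfl
    rw [hr]
    omega
  have hkey := stmt15_keyQ (d+3) (K+1) (fun j => m (d+4-j)) hkeyhyp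
  have hr : d + 3 + 1 = d + 4 := rfl
  rw [hr, ← hMre] at hkey
  -- hkey : 2*(K+1) + (d+3) ≤ M + 1;  hKdef : 2h + M = (e-1) + (K+1)
  have hK1 : K ≤ 1 := by omega
  have hh0 : h = 0 := by omega
  refine ⟨hh0, ?_⟩
  -- m 1 ≤ 3: look at the term j = d+3 in the sum
  have hterm : 2^(d+3) * m (d+4-(d+3)) ≤ ∑ j ∈ range (d+4), 2^j * m (d+4-j) :=
    Finset.single_le_sum (f := fun j => 2^j * m (d+4-j))
      (fun j _ => Nat.zero_le _) (Finset.mem_range.mpr (by omega))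
  have hidx : d + 4 - (d+3) = 1 := by omega
  rw [hidx] at hterm
  by_contra hm1
  push_neg at hm1
  have h4 : 2^(d+3) * 4 ≤ 2^(d+3) * m 1 := Nat.mul_le_mul_left _ hm1
  have hsum : (∑ j ∈ range (d+4), 2^j * m (d+4-j)) + 1 = (K+1) * 2^(d+4) := by
    rw [← hr]; exact hkeyhyp
  have hle2 : (K+1) * 2^(d+4) ≤ 2 * 2^(d+4) :=
    Nat.mul_le_mul_right _ (by omega)
  have hpow2 : 2 * (2:ℕ)^(d+4) = 2^(d+3) * 4 := by ring
  omega
end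

section
/- Let k ≥ 2 and let n_1, n_2, …, n_k be integers with n_i ≥ 2 for all i and gcd(n_1, …, n_k) = 1. Suppose d ≥ 1 is an integer dividing each of n_2, …, n_k with n_j/d ≥ 2 for all 2 ≤ j ≤ k. Then f(n_1, n_2, …, n_k) = d · f(n_1, n_2/d, …, n_k/d) + n_1·(d − 1), where f(m_1, …, m_k) denotes the Frobenius number, i.e., the largest natural number not expressible as ∑_{i=1}^k x_i m_i with nonnegative integers x_i. -/
/-- Brauer–Shockley recurrence for the Frobenius number: given `k + 1 ≥ 2`
numbers `n 0, …, n k`, if `d` divides `n 1, …, n k`, then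
`f(n 0, n 1, …, n k) = d·f(n 0, n 1/d, …, n k/d) + n 0·(d-1)`, where the
Frobenius number is the largest natural number not expressible as a
nonnegative integer combination. -/
theorem stmt16 (k : ℕ) (hk : 1 ≤ k) (n : Fin (k + 1) → ℕ) (hn : ∀ i, 2 ≤ n i)
    (hgcd : Finset.univ.gcd n = 1)
    (d : ℕ) (hd : 1 ≤ d) (hdvd : ∀ i : Fin (k + 1), i ≠ 0 → d ∣ n i)
    (hquot : ∀ i : Fin (k + 1), i ≠ 0 → 2 ≤ n i / d)
    (F F' : ℕ)
    (hF : IsGreatest {M : ℕ | ¬ ∃ x : Fin (k + 1) → ℕ, M = ∑ i, x i * n i} F)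
    (hF' : IsGreatest
      {M : ℕ | ¬ ∃ x : Fin (k + 1) → ℕ,
        M = ∑ i, x i * (if i = 0 then n i else n i / d)} F') :
    F = d * F' + n 0 * (d - 1) := by
  rcases eq_or_lt_of_le hd with hd1 | hd2
  · -- case d = 1
    have hd1' : d = 1 := hd1.symm
    subst hd1'
    have hset : {M : ℕ | ¬ ∃ x : Fin (k + 1) → ℕ,
        M = ∑ i, x i * (if i = 0 then n i else n i / 1)} =
        {M : ℕ | ¬ ∃ x : Fin (k + 1) → ℕ, M = ∑ i, x i * n i} := by
      simp [Nat.div_one]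
    rw [hset] at hF'
    have : F = F' := hF.unique hF'
    simp [this]
  -- main case 2 ≤ d
  have hd0 : 0 < d := hd
  have hcop : Nat.Coprime (n 0) d := by
    have h1 : Nat.gcd (n 0) d ∣ Finset.univ.gcd n := by
      apply Finset.dvd_gcd
      intro i _
      by_cases hi : i = 0
      · subst hi; exact Nat.gcd_dvd_left _ _
      · exact dvd_trans (Nat.gcd_dvd_right _ _) (hdvd i hi)
    rw [hgcd] at h1
    exact Nat.dvd_one.mp h1
  -- `d * F' + n 0 * (d-1)` is not representable
  have key1 : ¬ ∃ x : Fin (k + 1) → ℕ,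
      d * F' + n 0 * (d - 1) = ∑ i, x i * n i := by
    rintro ⟨x, hx⟩
    rw [Fin.sum_univ_succ] at hx
    set t := ∑ i : Fin k, x i.succ * (n i.succ / d) with ht
    have hT : ∑ i : Fin k, x i.succ * n i.succ = d * t := by
      rw [ht, Finset.mul_sum]
      refine Finset.sum_congr rfl fun i _ => ?_
      rw [mul_left_comm, Nat.mul_div_cancel' (hdvd i.succ (Fin.succ_ne_zero i))]
    rw [hT] at hx
    have hmod : (d - 1) ≡ x 0 [MOD d] := by
      refine Nat.ModEq.cancel_left_of_coprime (c := n 0) hcop.symm ?_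
      show (n 0 * (d - 1)) % d = (n 0 * x 0) % d
      calc n 0 * (d - 1) % d = (d * F' + n 0 * (d - 1)) % d := (Nat.mul_add_mod _ _ _).symm
        _ = (x 0 * n 0 + d * t) % d := by rw [hx]
        _ = (x 0 * n 0) % d := Nat.add_mul_mod_self_left _ _ _
        _ = (n 0 * x 0) % d := by rw [mul_comm]
    have hx0m : x 0 % d = d - 1 := by
      have h := hmod.symm
      unfold Nat.ModEq at h
      exact h.trans (Nat.mod_eq_of_lt (by omega))
    set s := x 0 / d with hs
    have hx0 : x 0 = d * s + (d - 1) := by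
      rw [← hx0m, hs]
      exact (Nat.div_add_mod _ _).symm
    have hF'eq : F' = s * n 0 + t := by
      refine Nat.eq_of_mul_eq_mul_left hd0 ?_
      have h2 : d * F' + n 0 * (d - 1) = d * (s * n 0 + t) + n 0 * (d - 1) := by
        rw [hx, hx0]; ring
      exact Nat.add_right_cancel h2
    apply hF'.1
    refine ⟨Fin.cons s (fun i => x i.succ), ?_⟩
    rw [Fin.sum_univ_succ]
    have hif : ∀ i : Fin k,
        (if i.succ = (0 : Fin (k + 1)) then n i.succ else n i.succ / d) = n i.succ / d :=
      fun i => if_neg (Fin.succ_ne_zero i)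
    simp only [Fin.cons_zero, Fin.cons_succ, hif, ite_true, if_true, eq_self_iff_true]
    exact hF'eq
  -- everything larger is representable
  have key2 : F ≤ d * F' + n 0 * (d - 1) := by
    by_contra hlt
    push_neg at hlt
    obtain ⟨u, -, hu⟩ := Nat.exists_mul_mod_eq_one_of_coprime hcop hd2
    set x0 := (F * u) % d with hx0def
    have hx0lt : x0 < d := Nat.mod_lt _ hd0
    have hcong : x0 * n 0 ≡ F [MOD d] := by
      have h1 : n 0 * u ≡ 1 [MOD d] := by
        show (n 0 * u) % d = 1 % d
        rw [hu, Nat.mod_eq_of_lt hd2]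
      have h2 : F * (n 0 * u) ≡ F * 1 [MOD d] := h1.mul_left F
      have h3 : x0 * n 0 ≡ (F * u) * n 0 [MOD d] := (Nat.mod_modEq _ _).mul_right _
      calc x0 * n 0 ≡ (F * u) * n 0 [MOD d] := h3
        _ = F * (n 0 * u) := by ring
        _ ≡ F * 1 [MOD d] := h2
        _ = F := by ring
    have hle1 : x0 * n 0 ≤ n 0 * (d - 1) := by
      rw [mul_comm]
      exact Nat.mul_le_mul_left _ (by omega)
    have hle : x0 * n 0 ≤ F :=
      le_trans (le_trans hle1 (Nat.le_add_left _ _)) (le_of_lt hlt)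
    have hdvdN : d ∣ F - x0 * n 0 := (Nat.modEq_iff_dvd' hle).mp hcong
    set N := (F - x0 * n 0) / d with hN
    have hNd : d * N = F - x0 * n 0 := Nat.mul_div_cancel' hdvdN
    have hFeq : F = x0 * n 0 + d * N := by
      rw [hNd, Nat.add_sub_cancel' hle]
    have hNgt : F' < N := by
      refine lt_of_mul_lt_mul_left ?_ (Nat.zero_le d)
      rw [hNd]
      have hb : d * F' + x0 * n 0 < F := lt_of_le_of_lt (Nat.add_le_add_left hle1 _) hlt
      omega
    have hrep : ∃ y : Fin (k + 1) → ℕ,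
        N = ∑ i, y i * (if i = 0 then n i else n i / d) := by
      by_contra h
      exact absurd (hF'.2 h) (not_le.mpr hNgt)
    obtain ⟨y, hy⟩ := hrep
    rw [Fin.sum_univ_succ] at hy
    have hif : ∀ i : Fin k,
        (if i.succ = (0 : Fin (k + 1)) then n i.succ else n i.succ / d) = n i.succ / d :=
      fun i => if_neg (Fin.succ_ne_zero i)
    rw [if_pos rfl] at hy
    simp only [hif] at hy
    set t := ∑ i : Fin k, y i.succ * (n i.succ / d) with ht
    apply hF.1
    refine ⟨Fin.cons (x0 + d * y 0) (fun i => y i.succ), ?_⟩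
    rw [Fin.sum_univ_succ]
    simp only [Fin.cons_zero, Fin.cons_succ]
    have hT : ∑ i : Fin k, y i.succ * n i.succ = d * t := by
      rw [ht, Finset.mul_sum]
      refine Finset.sum_congr rfl fun i _ => ?_
      rw [mul_left_comm, Nat.mul_div_cancel' (hdvd i.succ (Fin.succ_ne_zero i))]
    rw [hT]
    calc F = x0 * n 0 + d * N := hFeq
      _ = x0 * n 0 + d * (y 0 * n 0 + t) := by rw [← hy]
      _ = (x0 + d * y 0) * n 0 + d * t := by ring
  exact le_antisymm key2 (hF.2 key1)
end

section
/- Let G = PSL(2, 7), the quotient of SL(2, ℤ/7ℤ) by its center. Then every integer g ≥ 399 lies in sp(G), while 398 does not lie in sp(G); hence the stable upper genus of G equals 399. -/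
open Matrix
open scoped MatrixGroups
open scoped commutatorElement

/-- Genus spectrum membership, as in Riemann's Existence Theorem. -/
def IsGenus (G : Type*) [Group G] (g : ℕ) : Prop :=
  2 ≤ g ∧ ∃ (h r : ℕ) (n : Fin r → ℕ) (a b : Fin h → G) (c : Fin r → G),
    (∀ j, 2 ≤ n j) ∧ (∀ j, orderOf (c j) = n j) ∧
    Subgroup.closure (Set.range a ∪ Set.range b ∪ Set.range c) = ⊤ ∧
    (List.ofFn (fun i => ⁅a i, b i⁆)).prod * (List.ofFn c).prod = 1 ∧
    2 * ((g : ℚ) - 1) =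
      (Nat.card G : ℚ) * (2 * ((h : ℚ) - 1) + ∑ j, (1 - 1 / (n j : ℚ)))


namespace PSL27


abbrev SL := Matrix.SpecialLinearGroup (Fin 2) (ZMod 7)

instance : DecidableEq SL := fun a b => decidable_of_iff (a.1 = b.1) Subtype.ext_iff.symm

instance : Fact (Nat.Prime 7) := ⟨by norm_num⟩

def m1 : SL := ⟨!![-1,0;0,-1], by decide⟩

def P : SL →* PSL(2, ZMod 7) := QuotientGroup.mk' _

lemma m1_mem_center : m1 ∈ Subgroup.center SL := by
  rw [Subgroup.mem_center_iff]
  intro g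
  apply Subtype.ext
  rw [Matrix.SpecialLinearGroup.coe_mul, Matrix.SpecialLinearGroup.coe_mul]
  have : (m1.1 : Matrix (Fin 2) (Fin 2) (ZMod 7)) = -1 := by decide
  rw [this, mul_neg_one, neg_one_mul]

lemma mem_center_iff' (x : SL) : x ∈ Subgroup.center SL ↔ (x = 1 ∨ x = m1) := by
  constructor
  · intro hx
    obtain ⟨r, hr, hsc⟩ := Matrix.SpecialLinearGroup.mem_center_iff.mp hx
    rw [Fintype.card_fin] at hr
    have hr2 : r = 1 ∨ r = -1 := by
      have : ∀ r : ZMod 7, r ^ 2 = 1 → r = 1 ∨ r = -1 := by decide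
      exact this r hr
    rcases hr2 with rfl | rfl
    · left; apply Subtype.ext
      rw [← hsc]; decide
    · right; apply Subtype.ext
      rw [← hsc]; decide
  · rintro (rfl | rfl)
    · exact Subgroup.one_mem _
    · exact m1_mem_center

lemma P_mk (x : SL) : P x = QuotientGroup.mk x := rfl

lemma P_eq_one (x : SL) (h : x = 1 ∨ x = m1) : P x = 1 := by
  rw [P_mk, QuotientGroup.eq_one_iff, mem_center_iff' x]
  exact h

lemma P_ne_one (x : SL) (h1 : x ≠ 1) (h2 : x ≠ m1) : P x ≠ 1 := by
  rw [P_mk, Ne, QuotientGroup.eq_one_iff, mem_center_iff' x]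
  rintro (rfl | rfl) <;> simp at h1 h2

lemma Pcong (x y : SL) (h : x = y ∨ x = m1 * y) : P x = P y := by
  rcases h with rfl | rfl
  · rfl
  · rw [_root_.map_mul, P_eq_one m1 (Or.inr rfl), one_mul]

lemma ordP_prime (p : ℕ) [Fact p.Prime] (x : SL) (h1 : x ^ p = 1 ∨ x ^ p = m1)
    (h2 : x ≠ 1) (h3 : x ≠ m1) : orderOf (P x) = p := by
  refine orderOf_eq_prime ?_ (P_ne_one x h2 h3)
  rw [← map_pow]; exact P_eq_one _ h1

lemma ordP4 (x : SL) (h1 : x ^ 4 = 1 ∨ x ^ 4 = m1) (h2 : x ^ 2 ≠ 1) (h3 : x ^ 2 ≠ m1) :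
    orderOf (P x) = 4 := by
  have : orderOf (P x) = 2 ^ (1 + 1) := by
    apply orderOf_eq_prime_pow
    · rw [pow_one, ← map_pow]; exact P_ne_one _ h2 h3
    · rw [← map_pow]
      exact P_eq_one _ (by norm_num; exact h1)
  simpa using this

set_option maxRecDepth 100000 in
lemma card_SL : Nat.card SL = 336 := by
  rw [Nat.card_eq_fintype_card]
  decide

lemma card_PSL : Nat.card (PSL(2, ZMod 7)) = 168 := by
  have h1 : Subgroup.center SL = Subgroup.zpowers m1 := by
    apply le_antisymm
    · intro x hx
      rcases (mem_center_iff' x).mp hx with rfl | rfl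
      · exact Subgroup.one_mem _
      · exact Subgroup.mem_zpowers _
    · rw [Subgroup.zpowers_le]
      exact m1_mem_center
  have h2 : Nat.card (Subgroup.center SL) = 2 := by
    rw [h1, Nat.card_zpowers]
    refine orderOf_eq_prime (by decide) (by decide)
  have h3 := Subgroup.card_eq_card_quotient_mul_card_subgroup (Subgroup.center SL)
  rw [card_SL, h2] at h3
  show Nat.card (SL ⧸ Subgroup.center SL) = 168
  omega


def SLmk (A : Matrix (Fin 2) (Fin 2) (ZMod 7)) (h : A.det = 1) : SL := ⟨A, h⟩
@[simp] lemma SLmk_coe (A : Matrix (Fin 2) (Fin 2) (ZMod 7)) (h) : (SLmk A h).1 = A := rfl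
def e : SL := ⟨!![1,1;0,1], by decide⟩
@[simp] lemma e_coe : e.1 = !![1,1;0,1] := rfl
def f : SL := ⟨!![1,0;1,1], by decide⟩
@[simp] lemma f_coe : f.1 = !![1,0;1,1] := rfl

abbrev G7 := PSL(2, ZMod 7)

instance : Finite G7 := Quotient.finite _

def a2 : SL := SLmk !![0,1;6,0] (by decide)
def a3 : SL := SLmk !![0,1;6,1] (by decide)
def a4 : SL := SLmk !![1,1;1,2] (by decide)
def b223 : SL := SLmk !![0,2;3,0] (by decide)
def b234 : SL := SLmk !![1,1;4,5] (by decide)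
def b247 : SL := SLmk !![0,1;6,3] (by decide)
def b337 : SL := SLmk !![1,1;6,0] (by decide)
def b277 : SL := SLmk !![1,0;2,1] (by decide)
def c477 : SL := SLmk !![1,0;6,1] (by decide)
def bA : SL := SLmk !![0,6;1,1] (by decide)

def K : Subgroup SL := Subgroup.closure {e, f}

lemma epow : ∀ c : ZMod 7, (e ^ c.val).1 = !![1,c;0,1] := by decide
lemma fpow : ∀ c : ZMod 7, (f ^ c.val).1 = !![1,0;c,1] := by decide

lemma e_mem : e ∈ K := Subgroup.subset_closure (by simp [K])
lemma f_mem : f ∈ K := Subgroup.subset_closure (by simp [K])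

lemma trans_mem (t : TransvectionStruct (Fin 2) (ZMod 7)) :
    (SLmk t.toMatrix t.det) ∈ K := by
  obtain ⟨i, j, hij, c⟩ := t
  simp only [TransvectionStruct.toMatrix_mk]
  fin_cases i <;> fin_cases j <;> try exact absurd rfl hij
  · have h : (SLmk (transvection (0:Fin 2) 1 c) (by simp [det_transvection_of_ne])) = e ^ c.val := by
      apply Subtype.ext
      rw [epow]
      have : ∀ c : ZMod 7, transvection (0:Fin 2) 1 c = !![1,c;0,1] := by decide
      exact this c
    exact h ▸ pow_mem e_mem _
  · have h : (SLmk (transvection (1:Fin 2) 0 c) (by simp [det_transvection_of_ne])) = f ^ c.val := by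
      apply Subtype.ext
      rw [fpow]
      have : ∀ c : ZMod 7, transvection (1:Fin 2) 0 c = !![1,0;c,1] := by decide
      exact this c
    exact h ▸ pow_mem f_mem _

lemma diag_mem (D : Fin 2 → ZMod 7) (h : Matrix.det (Matrix.diagonal D) = 1) :
    (SLmk (Matrix.diagonal D) h) ∈ K := by
  have hab : D 0 * D 1 = 1 := by
    rw [Matrix.det_diagonal, Fin.prod_univ_two] at h; exact h
  have key : (SLmk (Matrix.diagonal D) h) * (e * f ^ (6:ZMod 7).val * e) =
      e ^ (D 0).val * f ^ (-(D 1)).val * e ^ (D 0).val := by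
    apply Subtype.ext
    simp only [Matrix.SpecialLinearGroup.coe_mul, epow, fpow, SLmk_coe, e_coe, f_coe]
    have key2 : ∀ a b : ZMod 7, a * b = 1 →
        !![a, 0; 0, b] * (!![1,1;0,1] * !![1,0;(6:ZMod 7),1] * !![1,1;0,1]) =
        !![1,a;0,1] * !![1,0;-b,1] * !![1,a;0,1] := by decide
    have hD : Matrix.diagonal D = !![D 0, 0; 0, D 1] := by
      ext i j; fin_cases i <;> fin_cases j <;> simp [Matrix.diagonal_apply]
    rw [hD]
    exact key2 (D 0) (D 1) hab
  have : (SLmk (Matrix.diagonal D) h) =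
      (e ^ (D 0).val * f ^ (-(D 1)).val * e ^ (D 0).val) * (e * f ^ (6:ZMod 7).val * e)⁻¹ := by
    rw [← key, mul_inv_cancel_right]
  rw [this]
  exact mul_mem (mul_mem (mul_mem (pow_mem e_mem _) (pow_mem f_mem _)) (pow_mem e_mem _))
    (inv_mem (mul_mem (mul_mem e_mem (pow_mem f_mem _)) e_mem))

lemma K_eq_top : K = ⊤ := by
  rw [eq_top_iff]
  intro N _
  obtain ⟨L, L', D, hD⟩ := Matrix.Pivot.exists_list_transvec_mul_diagonal_mul_list_transvec (N.1)
  have hdet : Matrix.det (Matrix.diagonal D) = 1 := by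
    have h1 := N.2
    rw [hD] at h1
    simp only [Matrix.det_mul, TransvectionStruct.det_toMatrix_prod] at h1
    simpa using h1
  have lift : ∀ (M : List (TransvectionStruct (Fin 2) (ZMod 7))),
      ∃ g : SL, g ∈ K ∧ g.1 = (M.map TransvectionStruct.toMatrix).prod := by
    intro M
    induction M with
    | nil => exact ⟨1, one_mem _, by simp⟩
    | cons t M ih =>
      obtain ⟨g, hg, hg2⟩ := ih
      exact ⟨(SLmk t.toMatrix t.det) * g, mul_mem (trans_mem t) hg,
        by simp [Matrix.SpecialLinearGroup.coe_mul, hg2, SLmk_coe]⟩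
  obtain ⟨g1, hg1, hg1c⟩ := lift L
  obtain ⟨g2, hg2, hg2c⟩ := lift L'
  have : N = g1 * (SLmk (Matrix.diagonal D) hdet) * g2 := by
    apply Subtype.ext
    simp only [Matrix.SpecialLinearGroup.coe_mul, hg1c, hg2c]
    exact hD
  rw [this]
  exact mul_mem (mul_mem hg1 (diag_mem D hdet)) hg2

lemma PSL_gen : Subgroup.closure ({P e, P f} : Set (PSL(2, ZMod 7))) = ⊤ := by
  have h1 : Subgroup.map P K = ⊤ := by
    rw [K_eq_top]
    exact Subgroup.map_top_of_surjective P (QuotientGroup.mk'_surjective _)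
  rw [← h1, K, MonoidHom.map_closure]
  congr 1
  simp [Set.image_insert_eq]



set_option maxRecDepth 100000 in
set_option maxHeartbeats 4000000 in
lemma pow_mem_center_all : ∀ x : SL,
    (x ^ 2 = 1 ∨ x ^ 2 = m1) ∨ (x ^ 3 = 1 ∨ x ^ 3 = m1) ∨
    (x ^ 4 = 1 ∨ x ^ 4 = m1) ∨ (x ^ 7 = 1 ∨ x ^ 7 = m1) := by decide

lemma dvd_cases (k m : ℕ) (hm : m = 2 ∨ m = 3 ∨ m = 4 ∨ m = 7) (h : k ∣ m) (hk : 0 < k) :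
    k = 1 ∨ k = 2 ∨ k = 3 ∨ k = 4 ∨ k = 7 := by
  have hle : k ≤ 7 := by
    rcases hm with rfl | rfl | rfl | rfl <;> exact le_trans (Nat.le_of_dvd (by norm_num) h) (by norm_num)
  interval_cases k <;> rcases hm with rfl | rfl | rfl | rfl <;> revert h <;> decide

lemma allOrders : ∀ z : G7, orderOf z = 1 ∨ orderOf z = 2 ∨ orderOf z = 3 ∨
    orderOf z = 4 ∨ orderOf z = 7 := by
  intro z
  obtain ⟨x, rfl⟩ := QuotientGroup.mk'_surjective (Subgroup.center SL) z
  have key : ∀ m : ℕ, (x ^ m = 1 ∨ x ^ m = m1) → orderOf (P x) ∣ m := by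
    intro m hm
    apply orderOf_dvd_of_pow_eq_one
    rw [← map_pow]
    exact P_eq_one _ hm
  have hpos : 0 < orderOf (P x) := orderOf_pos _
  have hx := pow_mem_center_all x
  show orderOf (P x) = 1 ∨ _
  rcases hx with h | h | h | h
  · exact dvd_cases _ 2 (by norm_num) (key 2 h) hpos
  · exact dvd_cases _ 3 (by norm_num) (key 3 h) hpos
  · exact dvd_cases _ 4 (by norm_num) (key 4 h) hpos
  · exact dvd_cases _ 7 (by norm_num) (key 7 h) hpos



noncomputable def wt (x : G7) : ℚ := 1 - 1/(orderOf x : ℚ)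
noncomputable def SW (L : List G7) : ℚ := (L.map wt).sum

lemma SW_append (A B : List G7) : SW (A ++ B) = SW A + SW B := by
  simp [SW]

lemma isGenus_of_list (g : ℕ) (L : List G7) (hg : 2 ≤ g)
    (hne : ∀ x ∈ L, x ≠ 1) (hprod : L.prod = 1)
    (hgen : Subgroup.closure {x | x ∈ L} = ⊤)
    (hval : 2 * ((g : ℚ) - 1) = 168 * (-2 + SW L)) : IsGenus G7 g := by
  refine ⟨hg, 0, L.length, fun j => orderOf (L.get j), Fin.elim0, Fin.elim0, L.get,
    ?_, fun j => rfl, ?_, ?_, ?_⟩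
  · intro j
    have h1 : L.get j ≠ 1 := hne _ (List.get_mem L j)
    have h2 : orderOf (L.get j) ≠ 1 := by
      rw [Ne, orderOf_eq_one_iff]; exact h1
    have h3 : 0 < orderOf (L.get j) := orderOf_pos _
    show 2 ≤ orderOf (L.get j)
    omega
  · have h0 : Set.range (Fin.elim0 : Fin 0 → G7) = ∅ := Set.range_eq_empty _
    have h1 : Set.range L.get = {x | x ∈ L} := by
      ext x
      simp [Set.mem_setOf_eq, List.mem_iff_get, eq_comm]
    rw [h0, h1]
    simpa using hgen
  · have h0 : (List.ofFn (fun i : Fin 0 => ⁅(Fin.elim0 : Fin 0 → G7) i, (Fin.elim0 : Fin 0 → G7) i⁆)) = ([] : List G7) :=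
      List.ofFn_zero
    rw [h0, List.prod_nil, one_mul, List.ofFn_get]
    exact hprod
  · rw [card_PSL]
    have : ∑ j, (1 - 1/((orderOf (L.get j)) : ℚ)) = SW L := by
      rw [SW, ← List.ofFn_getElem_eq_map L wt, List.sum_ofFn]
      rfl
    rw [this]
    push_cast
    linarith [hval]

def Blk (B : List G7) (w : ℚ) : Prop := B.prod = 1 ∧ (∀ x ∈ B, x ≠ 1) ∧ SW B = w

noncomputable def pairL (t : G7) : List G7 := [t, t⁻¹]
noncomputable def triL (s t : G7) : List G7 := [s, t, (s*t)⁻¹]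

lemma Blk_pair (t : G7) (o : ℕ) (h : orderOf t = o) (ho : o ≠ 1) :
    Blk (pairL t) (2 - 2/(o:ℚ)) := by
  have hne : t ≠ 1 := by rintro rfl; rw [orderOf_one] at h; exact ho h.symm
  refine ⟨by simp [pairL], ?_, ?_⟩
  · intro x hx
    rcases List.mem_pair.mp hx with rfl | rfl
    · exact hne
    · simpa using hne
  · simp only [SW, pairL, wt, List.map_cons, List.map_nil, List.sum_cons, List.sum_nil,
      orderOf_inv, h]
    ring

lemma Blk_tri (s t : G7) (o1 o2 o3 : ℕ) (h1 : orderOf s = o1) (h2 : orderOf t = o2)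
    (h3 : orderOf (s*t) = o3) (ho1 : o1 ≠ 1) (ho2 : o2 ≠ 1) (ho3 : o3 ≠ 1) :
    Blk (triL s t) (3 - 1/(o1:ℚ) - 1/(o2:ℚ) - 1/(o3:ℚ)) := by
  have hs : s ≠ 1 := by rintro rfl; rw [orderOf_one] at h1; exact ho1 h1.symm
  have ht : t ≠ 1 := by rintro rfl; rw [orderOf_one] at h2; exact ho2 h2.symm
  have hst : s * t ≠ 1 := by intro hh; rw [hh, orderOf_one] at h3; exact ho3 h3.symm
  refine ⟨by simp [triL, mul_assoc], ?_, ?_⟩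
  · intro x hx
    simp only [triL, List.mem_cons, List.not_mem_nil, or_false] at hx
    rcases hx with rfl | rfl | rfl
    · exact hs
    · exact ht
    · exact inv_ne_one.mpr hst
  · simp only [SW, triL, wt, List.map_cons, List.map_nil, List.sum_cons, List.sum_nil,
      orderOf_inv, h1, h2, h3]
    ring

lemma Blk_append (A B : List G7) (v w : ℚ) (hA : Blk A v) (hB : Blk B w) :
    Blk (A ++ B) (v + w) := by
  refine ⟨by rw [List.prod_append, hA.1, hB.1, one_mul], ?_, ?_⟩
  · intro x hx
    rcases List.mem_append.mp hx with h | h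
    · exact hA.2.1 x h
    · exact hB.2.1 x h
  · rw [SW_append, hA.2.2, hB.2.2]

lemma Blk_rep (B : List G7) (w : ℚ) (hB : Blk B w) (k : ℕ) :
    Blk (List.flatten (List.replicate k B)) (k * w) := by
  induction k with
  | zero => exact ⟨by simp, by simp, by simp [SW]⟩
  | succ k ih =>
    have : List.flatten (List.replicate (k+1) B) = B ++ List.flatten (List.replicate k B) := by
      simp [List.replicate_succ]
    rw [this]
    have := Blk_append _ _ _ _ hB ih
    convert this using 1
    push_cast; ring

lemma build (s t : G7) (B : List G7) (v w : ℚ) (g : ℕ) (hg : 2 ≤ g)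
    (hBase : Blk (triL s t) v)
    (hgen : Subgroup.closure {x | x ∈ triL s t} = ⊤)
    (hB : Blk B w)
    (hval : 2 * ((g : ℚ) - 1) = 168 * (-2 + v + w)) : IsGenus G7 g := by
  apply isGenus_of_list g (triL s t ++ B) hg
  · intro x hx
    rcases List.mem_append.mp hx with h | h
    · exact hBase.2.1 x h
    · exact hB.2.1 x h
  · rw [List.prod_append, hB.1, mul_one, hBase.1]
  · rw [eq_top_iff, ← hgen]
    apply Subgroup.closure_mono
    intro x hx
    simp only [Set.mem_setOf_eq, List.mem_append] at *
    exact Or.inl hx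
  · rw [SW_append, hB.2.2, hBase.2.2]
    linarith [hval]



lemma Blk_of (B : List G7) (w w' : ℚ) (h : Blk B w) (he : w = w') : Blk B w' := he ▸ h

lemma ord_a2 : orderOf (P a2) = 2 := ordP_prime 2 _ (by decide) (by decide) (by decide)
lemma ord_a3 : orderOf (P a3) = 3 := ordP_prime 3 _ (by decide) (by decide) (by decide)
lemma ord_a4 : orderOf (P a4) = 4 := ordP4 _ (by decide) (by decide) (by decide)
lemma ord_e : orderOf (P e) = 7 := ordP_prime 7 _ (by decide) (by decide) (by decide)
lemma ord_bA : orderOf (P bA) = 3 := ordP_prime 3 _ (by decide) (by decide) (by decide)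
lemma ord_b223 : orderOf (P b223) = 2 := ordP_prime 2 _ (by decide) (by decide) (by decide)
lemma ord_b234 : orderOf (P b234) = 3 := ordP_prime 3 _ (by decide) (by decide) (by decide)
lemma ord_b247 : orderOf (P b247) = 4 := ordP4 _ (by decide) (by decide) (by decide)
lemma ord_b337 : orderOf (P b337) = 3 := ordP_prime 3 _ (by decide) (by decide) (by decide)
lemma ord_b277 : orderOf (P b277) = 7 := ordP_prime 7 _ (by decide) (by decide) (by decide)
lemma ord_c477 : orderOf (P c477) = 7 := ordP_prime 7 _ (by decide) (by decide) (by decide)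
lemma ord_f : orderOf (P f) = 7 := ordP_prime 7 _ (by decide) (by decide) (by decide)

lemma ordm_A : orderOf (P a3 * P bA) = 4 := by
  rw [← _root_.map_mul]
  exact ordP4 _ (by decide) (by decide) (by decide)
lemma ordm_T223 : orderOf (P a2 * P b223) = 3 := by
  rw [← _root_.map_mul]
  exact ordP_prime 3 _ (by decide) (by decide) (by decide)
lemma ordm_T234 : orderOf (P a2 * P b234) = 4 := by
  rw [← _root_.map_mul]
  exact ordP4 _ (by decide) (by decide) (by decide)
lemma ordm_T237 : orderOf (P a2 * P a3) = 7 := by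
  rw [← _root_.map_mul]
  exact ordP_prime 7 _ (by decide) (by decide) (by decide)
lemma ordm_T247 : orderOf (P a2 * P b247) = 7 := by
  rw [← _root_.map_mul]
  exact ordP_prime 7 _ (by decide) (by decide) (by decide)
lemma ordm_T337 : orderOf (P a3 * P b337) = 7 := by
  rw [← _root_.map_mul]
  exact ordP_prime 7 _ (by decide) (by decide) (by decide)
lemma ordm_T277 : orderOf (P a2 * P b277) = 7 := by
  rw [← _root_.map_mul]
  exact ordP_prime 7 _ (by decide) (by decide) (by decide)
lemma ordm_T347 : orderOf (P a3 * P a4) = 7 := by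
  rw [← _root_.map_mul]
  exact ordP_prime 7 _ (by decide) (by decide) (by decide)
lemma ordm_T377 : orderOf (P a3 * P f) = 7 := by
  rw [← _root_.map_mul]
  exact ordP_prime 7 _ (by decide) (by decide) (by decide)
lemma ordm_T477 : orderOf (P a4 * P c477) = 7 := by
  rw [← _root_.map_mul]
  exact ordP_prime 7 _ (by decide) (by decide) (by decide)

lemma blk1 : Blk (pairL (P a2)) (1 : ℚ) :=
  Blk_of _ _ _ (Blk_pair _ 2 ord_a2 (by norm_num)) (by norm_num)
lemma blk2 : Blk (pairL (P a3)) (4/3 : ℚ) :=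
  Blk_of _ _ _ (Blk_pair _ 3 ord_a3 (by norm_num)) (by norm_num)
lemma blk3 : Blk (pairL (P a4)) (3/2 : ℚ) :=
  Blk_of _ _ _ (Blk_pair _ 4 ord_a4 (by norm_num)) (by norm_num)
lemma blk4 : Blk (pairL (P e)) (12/7 : ℚ) :=
  Blk_of _ _ _ (Blk_pair _ 7 ord_e (by norm_num)) (by norm_num)
lemma blk5 : Blk (triL (P a2) (P b223)) (5/3 : ℚ) :=
  Blk_of _ _ _ (Blk_tri _ _ 2 2 3 ord_a2 ord_b223 ordm_T223 (by norm_num) (by norm_num) (by norm_num)) (by norm_num)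
lemma blk6 : Blk (triL (P a2) (P b234)) (23/12 : ℚ) :=
  Blk_of _ _ _ (Blk_tri _ _ 2 3 4 ord_a2 ord_b234 ordm_T234 (by norm_num) (by norm_num) (by norm_num)) (by norm_num)
lemma blk7 : Blk (triL (P a2) (P a3)) (85/42 : ℚ) :=
  Blk_of _ _ _ (Blk_tri _ _ 2 3 7 ord_a2 ord_a3 ordm_T237 (by norm_num) (by norm_num) (by norm_num)) (by norm_num)
lemma blk8 : Blk (triL (P a2) (P b247)) (59/28 : ℚ) :=
  Blk_of _ _ _ (Blk_tri _ _ 2 4 7 ord_a2 ord_b247 ordm_T247 (by norm_num) (by norm_num) (by norm_num)) (by norm_num)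
lemma blk9 : Blk (triL (P a3) (P b337)) (46/21 : ℚ) :=
  Blk_of _ _ _ (Blk_tri _ _ 3 3 7 ord_a3 ord_b337 ordm_T337 (by norm_num) (by norm_num) (by norm_num)) (by norm_num)
lemma blk10 : Blk (triL (P a2) (P b277)) (31/14 : ℚ) :=
  Blk_of _ _ _ (Blk_tri _ _ 2 7 7 ord_a2 ord_b277 ordm_T277 (by norm_num) (by norm_num) (by norm_num)) (by norm_num)
lemma blk11 : Blk (triL (P a3) (P a4)) (191/84 : ℚ) :=
  Blk_of _ _ _ (Blk_tri _ _ 3 4 7 ord_a3 ord_a4 ordm_T347 (by norm_num) (by norm_num) (by norm_num)) (by norm_num)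
lemma blk12 : Blk (triL (P a3) (P f)) (50/21 : ℚ) :=
  Blk_of _ _ _ (Blk_tri _ _ 3 7 7 ord_a3 ord_f ordm_T377 (by norm_num) (by norm_num) (by norm_num)) (by norm_num)
lemma blk13 : Blk (triL (P a4) (P c477)) (69/28 : ℚ) :=
  Blk_of _ _ _ (Blk_tri _ _ 4 7 7 ord_a4 ord_c477 ordm_T477 (by norm_num) (by norm_num) (by norm_num)) (by norm_num)
lemma blkA : Blk (triL (P a3) (P bA)) (25/12 : ℚ) :=
  Blk_of _ _ _ (Blk_tri _ _ 3 3 4 ord_a3 ord_bA ordm_A (by norm_num) (by norm_num) (by norm_num)) (by norm_num)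

lemma mem_tri_left (s t : G7) : s ∈ Subgroup.closure {x | x ∈ triL s t} :=
  Subgroup.subset_closure (by simp [triL])
lemma mem_tri_mid (s t : G7) : t ∈ Subgroup.closure {x | x ∈ triL s t} :=
  Subgroup.subset_closure (by simp [triL])

lemma genA : Subgroup.closure {x | x ∈ triL (P a3) (P bA)} = ⊤ := by
  rw [eq_top_iff, ← PSL_gen, Subgroup.closure_le]
  intro z hz
  have hs := mem_tri_left (P a3) (P bA)
  have ht := mem_tri_mid (P a3) (P bA)
  simp only [Set.mem_insert_iff, Set.mem_singleton_iff] at hz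
  rcases hz with rfl | rfl
  · have hw : P (bA⁻¹ * (a3 * (bA⁻¹ * (a3 * (bA⁻¹ * a3))))) = P e := Pcong _ _ (by decide)
    rw [← hw]
    simp only [_root_.map_mul, map_inv]
    exact SetLike.mem_coe.mpr (mul_mem (inv_mem ht) (mul_mem hs (mul_mem (inv_mem ht)
      (mul_mem hs (mul_mem (inv_mem ht) hs)))))
  · have hw : P (bA * (a3⁻¹ * (bA * (a3⁻¹ * (bA * a3⁻¹))))) = P f := Pcong _ _ (by decide)
    rw [← hw]
    simp only [_root_.map_mul, map_inv]
    exact SetLike.mem_coe.mpr (mul_mem ht (mul_mem (inv_mem hs) (mul_mem ht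
      (mul_mem (inv_mem hs) (mul_mem ht (inv_mem hs))))))

lemma genB : Subgroup.closure {x | x ∈ triL (P a2) (P b277)} = ⊤ := by
  rw [eq_top_iff, ← PSL_gen, Subgroup.closure_le]
  intro z hz
  have hs := mem_tri_left (P a2) (P b277)
  have ht := mem_tri_mid (P a2) (P b277)
  simp only [Set.mem_insert_iff, Set.mem_singleton_iff] at hz
  rcases hz with rfl | rfl
  · have hw : P (a2 * (b277 * (b277 * (b277 * a2)))) = P e := Pcong _ _ (by decide)
    rw [← hw]
    simp only [_root_.map_mul, map_inv]
    exact SetLike.mem_coe.mpr (mul_mem hs (mul_mem ht (mul_mem ht (mul_mem ht hs))))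
  · have hw : P (b277⁻¹ * (b277⁻¹ * b277⁻¹)) = P f := Pcong _ _ (by decide)
    rw [← hw]
    simp only [_root_.map_mul, map_inv]
    exact SetLike.mem_coe.mpr (mul_mem (inv_mem ht) (mul_mem (inv_mem ht) (inv_mem ht)))

lemma arith (g : ℕ) (hg : 399 ≤ g) : ∃ k1 k2 k3 k4 k5 k6 k7 k8 k9 k10 k11 k12 k13 : ℕ,
    g = 8 + (84*k1 + 112*k2 + 126*k3 + 144*k4 + 140*k5 + 161*k6 + 170*k7 + 177*k8 + 184*k9 + 186*k10 + 191*k11 + 200*k12 + 207*k13) ∨ g = 19 + (84*k1 + 112*k2 + 126*k3 + 144*k4 + 140*k5 + 161*k6 + 170*k7 + 177*k8 + 184*k9 + 186*k10 + 191*k11 + 200*k12 + 207*k13) := by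
  obtain ⟨q, r, hr, hgq⟩ : ∃ q r, r < 84 ∧ g = 399 + 84*q + r :=
    ⟨(g-399)/84, (g-399)%84, Nat.mod_lt _ (by norm_num), by omega⟩
  interval_cases r
  · exact ⟨q+0, 0, 0, 0, 0, 0, 0, 0, 1, 0, 0, 0, 1, Or.inl (by omega)⟩
  · exact ⟨q+0, 1, 0, 0, 2, 0, 0, 0, 0, 0, 0, 0, 0, Or.inl (by omega)⟩
  · exact ⟨q+0, 0, 0, 0, 0, 0, 0, 0, 0, 1, 0, 0, 1, Or.inl (by omega)⟩
  · exact ⟨q+1, 0, 1, 0, 0, 0, 0, 0, 1, 0, 0, 0, 0, Or.inl (by omega)⟩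
  · exact ⟨q+0, 0, 0, 0, 0, 0, 0, 1, 0, 0, 0, 0, 1, Or.inr (by omega)⟩
  · exact ⟨q+1, 1, 0, 0, 0, 0, 0, 0, 0, 0, 0, 1, 0, Or.inl (by omega)⟩
  · exact ⟨q+0, 0, 0, 0, 0, 0, 0, 0, 0, 1, 0, 1, 0, Or.inr (by omega)⟩
  · exact ⟨q+0, 0, 0, 0, 0, 0, 0, 0, 0, 0, 1, 0, 1, Or.inl (by omega)⟩
  · exact ⟨q+0, 1, 1, 0, 0, 1, 0, 0, 0, 0, 0, 0, 0, Or.inl (by omega)⟩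
  · exact ⟨q+0, 0, 0, 0, 0, 0, 0, 0, 0, 0, 0, 2, 0, Or.inl (by omega)⟩
  · exact ⟨q+1, 0, 1, 0, 0, 0, 0, 0, 0, 0, 1, 0, 0, Or.inl (by omega)⟩
  · exact ⟨q+0, 0, 0, 0, 0, 0, 0, 0, 1, 0, 0, 0, 1, Or.inr (by omega)⟩
  · exact ⟨q+1, 1, 0, 0, 0, 0, 0, 0, 0, 0, 0, 0, 1, Or.inl (by omega)⟩
  · exact ⟨q+0, 0, 0, 0, 0, 0, 0, 0, 0, 1, 0, 0, 1, Or.inr (by omega)⟩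
  · exact ⟨q+1, 0, 0, 1, 0, 0, 0, 1, 0, 0, 0, 0, 0, Or.inl (by omega)⟩
  · exact ⟨q+1, 0, 0, 0, 0, 2, 0, 0, 0, 0, 0, 0, 0, Or.inl (by omega)⟩
  · exact ⟨q+0, 0, 0, 0, 0, 0, 0, 0, 0, 0, 0, 1, 1, Or.inl (by omega)⟩
  · exact ⟨q+1, 0, 0, 0, 1, 0, 0, 0, 1, 0, 0, 0, 0, Or.inl (by omega)⟩
  · exact ⟨q+0, 0, 0, 0, 0, 0, 0, 0, 0, 0, 1, 0, 1, Or.inr (by omega)⟩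
  · exact ⟨q+1, 0, 1, 0, 0, 0, 0, 0, 0, 0, 0, 1, 0, Or.inl (by omega)⟩
  · exact ⟨q+0, 0, 0, 0, 0, 0, 0, 0, 0, 0, 0, 2, 0, Or.inr (by omega)⟩
  · exact ⟨q+1, 0, 0, 1, 0, 0, 0, 0, 1, 0, 0, 0, 0, Or.inl (by omega)⟩
  · exact ⟨q+0, 1, 0, 0, 1, 1, 0, 0, 0, 0, 0, 0, 0, Or.inl (by omega)⟩
  · exact ⟨q+0, 0, 0, 0, 0, 0, 0, 0, 0, 0, 0, 0, 2, Or.inl (by omega)⟩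
  · exact ⟨q+1, 0, 0, 0, 1, 0, 0, 0, 0, 0, 1, 0, 0, Or.inl (by omega)⟩
  · exact ⟨q+1, 0, 0, 1, 0, 0, 0, 1, 0, 0, 0, 0, 0, Or.inr (by omega)⟩
  · exact ⟨q+1, 0, 1, 0, 0, 0, 0, 0, 0, 0, 0, 0, 1, Or.inl (by omega)⟩
  · exact ⟨q+0, 0, 0, 0, 0, 0, 0, 0, 0, 0, 0, 1, 1, Or.inr (by omega)⟩
  · exact ⟨q+1, 0, 0, 1, 0, 0, 0, 0, 0, 0, 1, 0, 0, Or.inl (by omega)⟩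
  · exact ⟨q+0, 0, 0, 0, 3, 0, 0, 0, 0, 0, 0, 0, 0, Or.inl (by omega)⟩
  · exact ⟨q+1, 0, 1, 0, 0, 0, 0, 0, 0, 0, 0, 1, 0, Or.inr (by omega)⟩
  · exact ⟨q+1, 0, 0, 0, 0, 1, 0, 1, 0, 0, 0, 0, 0, Or.inl (by omega)⟩
  · exact ⟨q+1, 0, 0, 1, 0, 0, 0, 0, 1, 0, 0, 0, 0, Or.inr (by omega)⟩
  · exact ⟨q+1, 0, 0, 0, 1, 0, 0, 0, 0, 0, 0, 1, 0, Or.inl (by omega)⟩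
  · exact ⟨q+0, 0, 0, 0, 0, 0, 0, 0, 0, 0, 0, 0, 2, Or.inr (by omega)⟩
  · exact ⟨q+0, 1, 0, 1, 0, 0, 1, 0, 0, 0, 0, 0, 0, Or.inl (by omega)⟩
  · exact ⟨q+0, 0, 1, 0, 1, 1, 0, 0, 0, 0, 0, 0, 0, Or.inl (by omega)⟩
  · exact ⟨q+1, 0, 0, 1, 0, 0, 0, 0, 0, 0, 0, 1, 0, Or.inl (by omega)⟩
  · exact ⟨q+1, 0, 0, 0, 0, 1, 0, 0, 1, 0, 0, 0, 0, Or.inl (by omega)⟩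
  · exact ⟨q+1, 0, 0, 1, 0, 0, 0, 0, 0, 0, 1, 0, 0, Or.inr (by omega)⟩
  · exact ⟨q+1, 0, 0, 0, 1, 0, 0, 0, 0, 0, 0, 0, 1, Or.inl (by omega)⟩
  · exact ⟨q+0, 0, 0, 3, 0, 0, 0, 0, 0, 0, 0, 0, 0, Or.inl (by omega)⟩
  · exact ⟨q+0, 1, 0, 1, 0, 0, 0, 1, 0, 0, 0, 0, 0, Or.inl (by omega)⟩
  · exact ⟨q+0, 1, 0, 0, 0, 2, 0, 0, 0, 0, 0, 0, 0, Or.inl (by omega)⟩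
  · exact ⟨q+1, 0, 0, 1, 0, 0, 0, 0, 0, 0, 0, 0, 1, Or.inl (by omega)⟩
  · exact ⟨q+1, 0, 0, 0, 0, 1, 0, 0, 0, 0, 1, 0, 0, Or.inl (by omega)⟩
  · exact ⟨q+0, 1, 0, 1, 0, 0, 1, 0, 0, 0, 0, 0, 0, Or.inr (by omega)⟩
  · exact ⟨q+1, 0, 0, 0, 0, 0, 1, 0, 1, 0, 0, 0, 0, Or.inl (by omega)⟩
  · exact ⟨q+1, 0, 0, 1, 0, 0, 0, 0, 0, 0, 0, 1, 0, Or.inr (by omega)⟩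
  · exact ⟨q+1, 0, 0, 0, 0, 0, 1, 0, 0, 1, 0, 0, 0, Or.inl (by omega)⟩
  · exact ⟨q+0, 0, 0, 0, 2, 1, 0, 0, 0, 0, 0, 0, 0, Or.inl (by omega)⟩
  · exact ⟨q+0, 1, 0, 1, 0, 0, 0, 0, 0, 1, 0, 0, 0, Or.inl (by omega)⟩
  · exact ⟨q+0, 1, 0, 0, 1, 0, 0, 0, 0, 0, 1, 0, 0, Or.inl (by omega)⟩
  · exact ⟨q+0, 1, 0, 1, 0, 0, 0, 1, 0, 0, 0, 0, 0, Or.inr (by omega)⟩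
  · exact ⟨q+1, 0, 0, 0, 0, 1, 0, 0, 0, 0, 0, 1, 0, Or.inl (by omega)⟩
  · exact ⟨q+1, 0, 0, 1, 0, 0, 0, 0, 0, 0, 0, 0, 1, Or.inr (by omega)⟩
  · exact ⟨q+1, 0, 0, 0, 0, 0, 0, 1, 0, 1, 0, 0, 0, Or.inl (by omega)⟩
  · exact ⟨q+0, 0, 1, 0, 0, 2, 0, 0, 0, 0, 0, 0, 0, Or.inl (by omega)⟩
  · exact ⟨q+0, 0, 0, 2, 0, 1, 0, 0, 0, 0, 0, 0, 0, Or.inl (by omega)⟩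
  · exact ⟨q+0, 1, 0, 0, 0, 1, 0, 1, 0, 0, 0, 0, 0, Or.inl (by omega)⟩
  · exact ⟨q+1, 0, 0, 0, 0, 0, 1, 0, 0, 1, 0, 0, 0, Or.inr (by omega)⟩
  · exact ⟨q+1, 0, 0, 0, 0, 1, 0, 0, 0, 0, 0, 0, 1, Or.inl (by omega)⟩
  · exact ⟨q+0, 1, 0, 1, 0, 0, 0, 0, 0, 1, 0, 0, 0, Or.inr (by omega)⟩
  · exact ⟨q+1, 0, 0, 0, 0, 0, 1, 0, 0, 0, 0, 1, 0, Or.inl (by omega)⟩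
  · exact ⟨q+2, 0, 1, 0, 0, 1, 0, 0, 0, 0, 0, 0, 0, Or.inl (by omega)⟩
  · exact ⟨q+1, 0, 0, 0, 0, 0, 0, 0, 0, 2, 0, 0, 0, Or.inl (by omega)⟩
  · exact ⟨q+0, 1, 0, 0, 0, 1, 0, 0, 1, 0, 0, 0, 0, Or.inl (by omega)⟩
  · exact ⟨q+0, 0, 0, 2, 0, 0, 1, 0, 0, 0, 0, 0, 0, Or.inl (by omega)⟩
  · exact ⟨q+1, 0, 0, 0, 0, 0, 0, 0, 1, 0, 1, 0, 0, Or.inl (by omega)⟩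
  · exact ⟨q+0, 0, 0, 2, 0, 1, 0, 0, 0, 0, 0, 0, 0, Or.inr (by omega)⟩
  · exact ⟨q+1, 0, 0, 0, 0, 0, 1, 0, 0, 0, 0, 0, 1, Or.inl (by omega)⟩
  · exact ⟨q+0, 0, 0, 0, 1, 2, 0, 0, 0, 0, 0, 0, 0, Or.inl (by omega)⟩
  · exact ⟨q+0, 1, 0, 1, 0, 0, 0, 0, 0, 0, 0, 0, 1, Or.inl (by omega)⟩
  · exact ⟨q+0, 1, 0, 0, 0, 1, 0, 0, 0, 0, 1, 0, 0, Or.inl (by omega)⟩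
  · exact ⟨q+0, 0, 0, 2, 0, 0, 0, 1, 0, 0, 0, 0, 0, Or.inl (by omega)⟩
  · exact ⟨q+1, 0, 0, 0, 0, 0, 0, 0, 0, 0, 2, 0, 0, Or.inl (by omega)⟩
  · exact ⟨q+1, 0, 0, 0, 0, 0, 0, 0, 0, 2, 0, 0, 0, Or.inr (by omega)⟩
  · exact ⟨q+1, 0, 0, 0, 0, 0, 0, 1, 0, 0, 0, 0, 1, Or.inl (by omega)⟩
  · exact ⟨q+2, 0, 0, 0, 1, 1, 0, 0, 0, 0, 0, 0, 0, Or.inl (by omega)⟩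
  · exact ⟨q+1, 0, 0, 0, 0, 0, 0, 0, 0, 1, 0, 1, 0, Or.inl (by omega)⟩
  · exact ⟨q+0, 0, 1, 0, 0, 1, 0, 0, 1, 0, 0, 0, 0, Or.inl (by omega)⟩
  · exact ⟨q+0, 0, 0, 2, 0, 0, 0, 0, 1, 0, 0, 0, 0, Or.inl (by omega)⟩
  · exact ⟨q+0, 1, 0, 0, 0, 1, 0, 0, 0, 0, 0, 1, 0, Or.inl (by omega)⟩
  · exact ⟨q+0, 0, 0, 2, 0, 0, 0, 0, 0, 1, 0, 0, 0, Or.inl (by omega)⟩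

theorem main (g : ℕ) (hg : 399 ≤ g) : IsGenus G7 g := by
  obtain ⟨k1, k2, k3, k4, k5, k6, k7, k8, k9, k10, k11, k12, k13, hcase⟩ := arith g hg
  have hBlk : Blk (List.flatten (List.replicate k1 (pairL (P a2))) ++ (List.flatten (List.replicate k2 (pairL (P a3))) ++ (List.flatten (List.replicate k3 (pairL (P a4))) ++ (List.flatten (List.replicate k4 (pairL (P e))) ++ (List.flatten (List.replicate k5 (triL (P a2) (P b223))) ++ (List.flatten (List.replicate k6 (triL (P a2) (P b234))) ++ (List.flatten (List.replicate k7 (triL (P a2) (P a3))) ++ (List.flatten (List.replicate k8 (triL (P a2) (P b247))) ++ (List.flatten (List.replicate k9 (triL (P a3) (P b337))) ++ (List.flatten (List.replicate k10 (triL (P a2) (P b277))) ++ (List.flatten (List.replicate k11 (triL (P a3) (P a4))) ++ (List.flatten (List.replicate k12 (triL (P a3) (P f))) ++ (List.flatten (List.replicate k13 (triL (P a4) (P c477)))))))))))))))) ((k1 : ℚ) * (1 : ℚ) + ((k2 : ℚ) * (4/3 : ℚ) + ((k3 : ℚ) * (3/2 : ℚ) + ((k4 : ℚ) * (12/7 :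 ℚ) + ((k5 : ℚ) * (5/3 : ℚ) + ((k6 : ℚ) * (23/12 : ℚ) + ((k7 : ℚ) * (85/42 : ℚ) + ((k8 : ℚ) * (59/28 : ℚ) + ((k9 : ℚ) * (46/21 : ℚ) + ((k10 : ℚ) * (31/14 : ℚ) + ((k11 : ℚ) * (191/84 : ℚ) + ((k12 : ℚ) * (50/21 : ℚ) + ((k13 : ℚ) * (69/28 : ℚ)))))))))))))) :=
    (Blk_append _ _ _ _ (Blk_rep _ _ blk1 k1) (Blk_append _ _ _ _ (Blk_rep _ _ blk2 k2) (Blk_append _ _ _ _ (Blk_rep _ _ blk3 k3) (Blk_append _ _ _ _ (Blk_rep _ _ blk4 k4) (Blk_append _ _ _ _ (Blk_rep _ _ blk5 k5) (Blk_append _ _ _ _ (Blk_rep _ _ blk6 k6) (Blk_append _ _ _ _ (Blk_rep _ _ blk7 k7) (Blk_append _ _ _ _ (Blk_rep _ _ blk8 k8) (Blk_append _ _ _ _ (Blk_rep _ _ blk9 k9) (Blk_append _ _ _ _ (Blk_rep _ _ blk10 k10) (Blk_append _ _ _ _ (Blk_rep _ _ blk11 k11) (Blk_append _ _ _ _ (Blk_rep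 _ _ blk12 k12) (Blk_rep _ _ blk13 k13)))))))))))))
  rcases hcase with hc | hc
  · exact build _ _ _ _ _ g (by omega) blkA genA hBlk (by subst hc; push_cast; ring)
  · exact build _ _ _ _ _ g (by omega) blk10 genB hBlk (by subst hc; push_cast; ring)



lemma sum_w (r : ℕ) : ∀ (n : Fin r → ℕ), (∀ j, n j = 2 ∨ n j = 3 ∨ n j = 4 ∨ n j = 7) →
    ∃ A B C D : ℕ, ∑ j, (84 - 84/(n j)) = 42*A + 56*B + 63*C + 72*D := by
  induction r with
  | zero => exact fun n _ => ⟨0, 0, 0, 0, by simp⟩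
  | succ r ih =>
    intro n hn
    obtain ⟨A, B, C, D, hs⟩ := ih (fun j => n j.succ) (fun j => hn j.succ)
    rw [Fin.sum_univ_succ, hs]
    rcases hn 0 with h | h | h | h <;> rw [h]
    · exact ⟨A+1, B, C, D, by omega⟩
    · exact ⟨A, B+1, C, D, by omega⟩
    · exact ⟨A, B, C+1, D, by omega⟩
    · exact ⟨A, B, C, D+1, by omega⟩

theorem not_genus_398 : ¬ IsGenus G7 398 := by
  rintro ⟨-, h, r, n, a, b, c, hn2, hord, -, -, hval⟩
  have hmem : ∀ j, n j = 2 ∨ n j = 3 ∨ n j = 4 ∨ n j = 7 := by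
    intro j
    have h1 := allOrders (c j)
    rw [hord j] at h1
    have h2 := hn2 j
    omega
  obtain ⟨A, B, C, D, hW⟩ := sum_w r n hmem
  have hsum : ∑ j, (1 - 1/(n j : ℚ)) = ((∑ j, (84 - 84/(n j)) : ℕ) : ℚ) / 84 := by
    rw [Nat.cast_sum, Finset.sum_div]
    apply Finset.sum_congr rfl
    intro j _
    rcases hmem j with h | h | h | h <;> rw [h] <;> norm_num
  rw [card_PSL, hsum, hW] at hval
  have hnat : (1130 : ℚ) = ((336*h + 2*(42*A + 56*B + 63*C + 72*D) : ℕ) : ℚ) := by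
    push_cast
    push_cast at hval
    linarith [hval]
  have : (1130 : ℕ) = 336*h + 2*(42*A + 56*B + 63*C + 72*D) := by exact_mod_cast hnat
  omega



end PSL27

/-- The stable upper genus of `PSL(2, 7)` equals `399`: every `g ≥ 399` is a
genus of `PSL(2, 7)`, while `398` is not. -/
theorem stmt19 :
    (∀ g : ℕ, 399 ≤ g → IsGenus (PSL(2, ZMod 7)) g) ∧
      ¬ IsGenus (PSL(2, ZMod 7)) 398 := by
  exact ⟨fun g hg => PSL27.main g hg, PSL27.not_genus_398⟩
end
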